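/- arXiv:0803.3303 — 5 statements merged into one kernel-verified Lean document; each statement's English description precedes it below -/
import Mathlib

section
/- Let X be a quasimartingale with conditional variation Var_X(t) = sup over simple previsible |ξ| ≤ 1 of E[∫_0^t ξ dX], and set C(t,x) = E[(X_t - x)_+]. Then for s ≤ t and all x, C(t,x) ≥ C(s,x) - (Var_X(t) - Var_X(s)); in particular t ↦ C(t,x) + Var_X(t) is nondecreasing. -/
open MeasureTheory Filter Set Function Topology

noncomputable section

namespace GBE

variable {Ω : Type*} {m0 : MeasurableSpace Ω}

/-- A real-valued path is càdlàg: right-continuous with left limits everywhere. -/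
def CadlagOn (f : ℝ → ℝ) : Prop :=
  (∀ t : ℝ, ContinuousWithinAt f (Ici t) t) ∧
  (∀ t : ℝ, ∃ l : ℝ, Tendsto f (nhdsWithin t (Iio t)) (nhds l))

/-- A process is càdlàg if every path is càdlàg. -/
def Cadlag (X : ℝ → Ω → ℝ) : Prop := ∀ ω, CadlagOn (fun t => X t ω)

/-- The jump of a path at a time `t`. -/
def jump (f : ℝ → ℝ) (t : ℝ) : ℝ := f t - Function.leftLim f t

/-- A local martingale: there is a localizing sequence of stopping times increasing
to infinity such that the stopped processes are martingales. -/
def IsLocalMartingale (μ : Measure Ω) (ℱ : Filtration ℝ m0) (M : ℝ → Ω → ℝ) : Prop :=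
  ∃ τ : ℕ → Ω → ℝ,
    (∀ n, IsStoppingTime ℱ (fun ω => ((τ n ω : ℝ) : WithTop ℝ))) ∧
    (∀ n ω, 0 ≤ τ n ω) ∧
    (∀ ω, Tendsto (fun n => τ n ω) atTop atTop) ∧
    ∀ n, Martingale (fun t ω => M (min t (τ n ω)) ω) ℱ μ

/-- The previsible (predictable) σ-algebra on `ℝ × Ω`, generated by sets
`(s,∞) × A` with `A ∈ ℱ s` and `(-∞,0] × A` with `A ∈ ℱ 0`. -/
def predictableSigma (ℱ : Filtration ℝ m0) : MeasurableSpace (ℝ × Ω) :=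
  MeasurableSpace.generateFrom
    ({p | ∃ (s : ℝ) (A : Set Ω), MeasurableSet[ℱ s] A ∧ p = (Set.Ioi s) ×ˢ A} ∪
     {p | ∃ A : Set Ω, MeasurableSet[ℱ 0] A ∧ p = (Set.Iic (0:ℝ)) ×ˢ A})

/-- A previsible process. -/
def Previsible (ℱ : Filtration ℝ m0) (A : ℝ → Ω → ℝ) : Prop :=
  @Measurable (ℝ × Ω) ℝ (predictableSigma ℱ) _ (fun p : ℝ × Ω => A p.1 p.2)

/-- Locally finite variation: finite variation on each interval `[0,T]`, pathwise. -/
def LocFV (A : ℝ → Ω → ℝ) : Prop :=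
  ∀ ω, ∀ T : ℝ, eVariationOn (fun t => A t ω) (Icc 0 T) < ⊤

/-- A (stochastic) partition: an increasing sequence of stopping times starting at 0
and tending to infinity. -/
def IsPartition (ℱ : Filtration ℝ m0) (τ : ℕ → Ω → ℝ) : Prop :=
  (∀ ω, τ 0 ω = 0) ∧ (∀ n ω, τ n ω ≤ τ (n+1) ω) ∧
  (∀ ω, Tendsto (fun n => τ n ω) atTop atTop) ∧
  (∀ n, IsStoppingTime ℱ (fun ω => ((τ n ω : ℝ) : WithTop ℝ)))

/-- The mesh of a sequence of partitions tends to zero. -/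
def MeshTendstoZero (P : ℕ → ℕ → Ω → ℝ) : Prop :=
  ∀ ε > (0:ℝ), ∃ N, ∀ n ≥ N, ∀ k ω, P n (k+1) ω - P n k ω ≤ ε

/-- Approximation to the quadratic covariation of `X` and `Y` along a partition. -/
def covApprox (τ : ℕ → Ω → ℝ) (X Y : ℝ → Ω → ℝ) (t : ℝ) (ω : Ω) : ℝ :=
  ∑' k : ℕ, (X (min (τ (k+1) ω) t) ω - X (min (τ k ω) t) ω) *
            (Y (min (τ (k+1) ω) t) ω - Y (min (τ k ω) t) ω)

/-- Convergence uniformly on compacts in probability (ucp). -/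
def TendstoUcp (μ : Measure Ω) (F : ℕ → ℝ → Ω → ℝ) (G : ℝ → Ω → ℝ) : Prop :=
  ∀ T > (0:ℝ), ∀ ε > (0:ℝ),
    Tendsto (fun n => μ {ω | ∃ t ∈ Icc (0:ℝ) T, ε ≤ |F n t ω - G t ω|}) atTop (nhds 0)

/-- `Q` is the quadratic covariation `[X,Y]`: the ucp limit of the partition
approximations as the mesh tends to zero. -/
def HasCovariation (μ : Measure Ω) (ℱ : Filtration ℝ m0) (X Y Q : ℝ → Ω → ℝ) : Prop :=
  ∀ P : ℕ → ℕ → Ω → ℝ, (∀ n, IsPartition ℱ (P n)) → MeshTendstoZero P →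
    TendstoUcp μ (fun n t ω => covApprox (P n) X Y t ω) Q

/-- `Q` is the quadratic variation `[X]`. -/
def HasQV (μ : Measure Ω) (ℱ : Filtration ℝ m0) (X Q : ℝ → Ω → ℝ) : Prop :=
  HasCovariation μ ℱ X X Q

/-- The sum of products of jumps `Σ_{s ≤ t} ΔX_s ΔY_s`. -/
def jumpCov (X Y : ℝ → Ω → ℝ) (t : ℝ) (ω : Ω) : ℝ :=
  ∑' s : Ioc (0:ℝ) t, jump (fun u => X u ω) s * jump (fun u => Y u ω) s

/-- A zero continuous quadratic variation (z.c.q.v.) process: càdlàg, adapted, whose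
quadratic variation exists and equals the sum of squared jumps. -/
def Zcqv (μ : Measure Ω) (ℱ : Filtration ℝ m0) (V : ℝ → Ω → ℝ) : Prop :=
  Cadlag V ∧ Adapted ℱ V ∧ HasQV μ ℱ V (jumpCov V V)

/-- A semimartingale: a càdlàg adapted process decomposing as a local martingale plus
a càdlàg adapted process of locally finite variation. -/
def IsSemimartingale (μ : Measure Ω) (ℱ : Filtration ℝ m0) (X : ℝ → Ω → ℝ) : Prop :=
  Cadlag X ∧ Adapted ℱ X ∧
  ∃ M A, IsLocalMartingale μ ℱ M ∧ Cadlag A ∧ Adapted ℱ A ∧ LocFV A ∧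
    ∀ t ω, X t ω = M t ω + A t ω

/-- A Dirichlet process: the sum of a local martingale and a z.c.q.v. process. -/
def IsDirichlet (μ : Measure Ω) (ℱ : Filtration ℝ m0) (X : ℝ → Ω → ℝ) : Prop :=
  Cadlag X ∧ Adapted ℱ X ∧
  ∃ M V, IsLocalMartingale μ ℱ M ∧ Zcqv μ ℱ V ∧ ∀ t ω, X t ω = M t ω + V t ω

/-- `I` is the stochastic integral `∫ H_{s-} dX_s` of the left limits of the càdlàg
process `H` with respect to `X`: the ucp limit of left-point Riemann sums. -/
def IsStochIntegral (μ : Measure Ω) (ℱ : Filtration ℝ m0) (H X I : ℝ → Ω → ℝ) : Prop :=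
  ∀ P : ℕ → ℕ → Ω → ℝ, (∀ n, IsPartition ℱ (P n)) → MeshTendstoZero P →
    TendstoUcp μ (fun n t ω =>
      ∑' k : ℕ, H (min (P n k ω) t) ω *
        (X (min (P n (k+1) ω) t) ω - X (min (P n k ω) t) ω)) I

/-- Class (DL): for each `t`, the stopped values `X_{τ ∧ t}` over all stopping times
`τ` are uniformly integrable. -/
def ClassDL (μ : Measure Ω) (ℱ : Filtration ℝ m0) (X : ℝ → Ω → ℝ) : Prop :=
  ∀ t : ℝ, UniformIntegrable
    (fun (τ : {τ : Ω → ℝ // IsStoppingTime ℱ (fun ω => ((τ ω : ℝ) : WithTop ℝ)) ∧ ∀ ω, 0 ≤ τ ω}) ω => X (min (τ.1 ω) t) ω) 1 μ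

/-- The set of values `E[∫_0^t ξ dX]` over simple previsible `|ξ| ≤ 1`. -/
def simpleVals (μ : Measure Ω) (ℱ : Filtration ℝ m0) (X : ℝ → Ω → ℝ) (t : ℝ) : Set ℝ :=
  {v | ∃ (n : ℕ) (τ : Fin (n+1) → ℝ) (ξ : Fin n → Ω → ℝ),
    Monotone τ ∧ (∀ i, 0 ≤ τ i ∧ τ i ≤ t) ∧
    (∀ i : Fin n, @Measurable Ω ℝ (ℱ (τ i.castSucc)) _ (ξ i) ∧ ∀ ω, |ξ i ω| ≤ 1) ∧
    v = ∫ ω, (∑ i : Fin n, ξ i ω * (X (τ i.succ) ω - X (τ i.castSucc) ω)) ∂μ}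

/-- The conditional variation `Var_X(t)`. -/
def condVar (μ : Measure Ω) (ℱ : Filtration ℝ m0) (X : ℝ → Ω → ℝ) (t : ℝ) : ℝ :=
  sSup (simpleVals μ ℱ X t)

/-- A quasimartingale: càdlàg, adapted, integrable, with finite conditional variation
on every finite interval. -/
def IsQuasimartingale (μ : Measure Ω) (ℱ : Filtration ℝ m0) (X : ℝ → Ω → ℝ) : Prop :=
  Cadlag X ∧ Adapted ℱ X ∧ (∀ t, Integrable (X t) μ) ∧
  ∀ t, BddAbove (simpleVals μ ℱ X t)

/-- The natural filtration σ-algebra `ℱ^X_t = σ(X_s : 0 ≤ s ≤ t)`. -/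
def natSigma (X : ℝ → Ω → ℝ) (t : ℝ) : MeasurableSpace Ω :=
  ⨆ (s : ℝ) (_ : s ∈ Icc (0:ℝ) t), MeasurableSpace.comap (X s) inferInstance

/-- The time-reversed σ-algebra `G^X_s = σ(X_u : u ≥ s)`. -/
def revSigma (X : ℝ → Ω → ℝ) (s : ℝ) : MeasurableSpace Ω :=
  ⨆ (u : ℝ) (_ : s ≤ u), MeasurableSpace.comap (X u) inferInstance

/-- The Markov property of `X`, stated via conditional expectations of indicators. -/
def IsMarkov (μ : Measure Ω) (X : ℝ → Ω → ℝ) : Prop :=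
  ∀ (s t : ℝ), s ≤ t → ∀ (B : Set ℝ), MeasurableSet B →
    μ[((X t) ⁻¹' B).indicator (fun _ => (1:ℝ)) | natSigma X s]
      =ᵐ[μ] μ[((X t) ⁻¹' B).indicator (fun _ => (1:ℝ)) | MeasurableSpace.comap (X s) inferInstance]

/-- A previsible (announceable) stopping time. -/
def IsPredictableTime (ℱ : Filtration ℝ m0) (τ : Ω → ℝ) : Prop :=
  ∃ τn : ℕ → Ω → ℝ, (∀ n, IsStoppingTime ℱ (fun ω => ((τn n ω : ℝ) : WithTop ℝ))) ∧ (∀ n ω, τn n ω ≤ τn (n+1) ω) ∧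
    (∀ ω, Tendsto (fun n => τn n ω) atTop (nhds (τ ω))) ∧ (∀ n ω, 0 < τ ω → τn n ω < τ ω)

/-- Quasi-left-continuity: `X` does not jump at previsible times. -/
def QuasiLeftContinuous (μ : Measure Ω) (ℱ : Filtration ℝ m0) (X : ℝ → Ω → ℝ) : Prop :=
  ∀ τ : Ω → ℝ, IsPredictableTime ℱ τ → IsStoppingTime ℱ (fun ω => ((τ ω : ℝ) : WithTop ℝ)) → (∀ ω, 0 < τ ω) →
    ∀ᵐ ω ∂μ, Function.leftLim (fun t => X t ω) (τ ω) = X (τ ω) ω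

end GBE
open GBE MeasureTheory Set


section Aux

variable {Ω : Type*} {m0 : MeasurableSpace Ω}

private lemma monotone_snoc {n : ℕ} {f : Fin (n+1) → ℝ} {a : ℝ} (hf : Monotone f)
    (ha : ∀ i, f i ≤ a) : Monotone (Fin.snoc f a : Fin (n+2) → ℝ) := by
  intro i j hij
  rcases eq_or_ne j (Fin.last _) with rfl | hj
  · rw [Fin.snoc_last]
    rcases eq_or_ne i (Fin.last _) with rfl | hi
    · rw [Fin.snoc_last]
    · obtain ⟨i', rfl⟩ := Fin.exists_castSucc_eq.mpr hi
      rw [Fin.snoc_castSucc]; exact ha i'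
  · obtain ⟨j', rfl⟩ := Fin.exists_castSucc_eq.mpr hj
    have hi : i ≠ Fin.last _ := by
      rintro rfl; exact absurd hij (not_le.2 (Fin.castSucc_lt_last j'))
    obtain ⟨i', rfl⟩ := Fin.exists_castSucc_eq.mpr hi
    rw [Fin.snoc_castSucc, Fin.snoc_castSucc]
    exact hf (Fin.castSucc_le_castSucc_iff.mp hij)

private lemma integrable_term (μ : Measure Ω) [IsProbabilityMeasure μ]
    (ℱ : Filtration ℝ m0) (X : ℝ → Ω → ℝ) (hint : ∀ t, Integrable (X t) μ)
    {s : ℝ} {η : Ω → ℝ} (hη : @Measurable Ω ℝ (ℱ s) _ η) (hb : ∀ ω, |η ω| ≤ 1)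
    (u v : ℝ) : Integrable (fun ω => η ω * (X u ω - X v ω)) μ := by
  have hm : Measurable η := hη.mono (ℱ.le s) le_rfl
  exact ((hint u).sub (hint v)).bdd_mul (c := 1) hm.aestronglyMeasurable
    (ae_of_all _ fun ω => by simpa using hb ω)

private lemma mem_simpleVals_add (μ : Measure Ω) [IsProbabilityMeasure μ]
    (ℱ : Filtration ℝ m0) (X : ℝ → Ω → ℝ) (hint : ∀ t, Integrable (X t) μ)
    {s t : ℝ} (hs : 0 ≤ s) (hst : s ≤ t)
    {η : Ω → ℝ} (hη : @Measurable Ω ℝ (ℱ s) _ η) (hb : ∀ ω, |η ω| ≤ 1)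
    {v : ℝ} (hv : v ∈ simpleVals μ ℱ X s) :
    v + ∫ ω, η ω * (X t ω - X s ω) ∂μ ∈ simpleVals μ ℱ X t := by
  obtain ⟨n, τ, ξ, hτmono, hτbd, hξ, rfl⟩ := hv
  refine ⟨n+2, Fin.snoc (Fin.snoc τ s) t,
    Fin.snoc (Fin.snoc ξ (fun _ => (0:ℝ))) η, ?_, ?_, ?_, ?_⟩
  · exact monotone_snoc (monotone_snoc hτmono (fun i => (hτbd i).2))
      (by intro i
          refine Fin.lastCases ?_ (fun j => ?_) i
          · simp [hst]
          · simp only [Fin.snoc_castSucc]; exact le_trans (hτbd j).2 hst)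
  · intro i
    refine Fin.lastCases ?_ (fun j => ?_) i
    · simp [le_trans hs hst]
    · simp only [Fin.snoc_castSucc]
      refine Fin.lastCases ?_ (fun k => ?_) j
      · simp [hs, hst]
      · simp only [Fin.snoc_castSucc]
        exact ⟨(hτbd k).1, le_trans (hτbd k).2 hst⟩
  · intro i
    refine Fin.lastCases ?_ (fun j => ?_) i
    · constructor
      · rw [Fin.snoc_castSucc, Fin.snoc_last]
        simpa [Fin.snoc_castSucc, Fin.snoc_last] using hη
      · intro ω; simpa using hb ω
    · simp only [Fin.snoc_castSucc]
      refine Fin.lastCases ?_ (fun k => ?_) j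
      · constructor
        · simp only [Fin.snoc_last]
          exact @measurable_const ℝ Ω _ (ℱ _) 0
        · intro ω; simp
      · simp only [Fin.snoc_castSucc]
        rw [Fin.snoc_castSucc, Fin.snoc_castSucc]
        refine ⟨(hξ k).1, (hξ k).2⟩
  · have hpt : ∀ ω,
        (∑ i : Fin (n+2), (Fin.snoc (Fin.snoc ξ (fun _ => (0:ℝ))) η : Fin (n+2) → Ω → ℝ) i ω *
          (X ((Fin.snoc (Fin.snoc τ s) t : Fin (n+3) → ℝ) i.succ) ω -
           X ((Fin.snoc (Fin.snoc τ s) t : Fin (n+3) → ℝ) i.castSucc) ω)) =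
        (∑ i : Fin n, ξ i ω * (X (τ i.succ) ω - X (τ i.castSucc) ω)) +
          η ω * (X t ω - X s ω) := by
      intro ω
      rw [Fin.sum_univ_castSucc, Fin.sum_univ_castSucc]
      simp [Fin.snoc_castSucc, Fin.snoc_last, Fin.succ_castSucc, Fin.succ_last, -Fin.castSucc_succ]
    have hold : Integrable (fun ω => ∑ i : Fin n,
        ξ i ω * (X (τ i.succ) ω - X (τ i.castSucc) ω)) μ :=
      integrable_finset_sum _ (fun i _ =>
        integrable_term μ ℱ X hint (hξ i).1 (hξ i).2 _ _)
    have hextra : Integrable (fun ω => η ω * (X t ω - X s ω)) μ :=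
      integrable_term μ ℱ X hint hη hb t s
    rw [show (fun ω => ∑ i : Fin (n+2),
        (Fin.snoc (Fin.snoc ξ (fun _ => (0:ℝ))) η : Fin (n+2) → Ω → ℝ) i ω *
          (X ((Fin.snoc (Fin.snoc τ s) t : Fin (n+3) → ℝ) i.succ) ω -
           X ((Fin.snoc (Fin.snoc τ s) t : Fin (n+3) → ℝ) i.castSucc) ω)) =
        fun ω => (∑ i : Fin n, ξ i ω * (X (τ i.succ) ω - X (τ i.castSucc) ω)) +
          η ω * (X t ω - X s ω) from funext hpt,
      integral_add hold hextra]

private lemma zero_mem_simpleVals (μ : Measure Ω) (ℱ : Filtration ℝ m0)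
    (X : ℝ → Ω → ℝ) {s : ℝ} (hs : 0 ≤ s) : (0:ℝ) ∈ simpleVals μ ℱ X s :=
  ⟨0, fun _ => 0, Fin.elim0, monotone_const, fun _ => ⟨le_rfl, hs⟩,
    fun i => i.elim0, by simp⟩

end Aux

/-- for a quasimartingale `X`, `C(t,x) ≥ C(s,x) − (Var_X(t) − Var_X(s))`
for `s ≤ t`; in particular `t ↦ C(t,x) + Var_X(t)` is nondecreasing. -/
theorem stmt2 {Ω : Type*} {m0 : MeasurableSpace Ω} (μ : Measure Ω) [IsProbabilityMeasure μ]
    (ℱ : Filtration ℝ m0) (X : ℝ → Ω → ℝ)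
    (hqm : IsQuasimartingale μ ℱ X)
    (C : ℝ → ℝ → ℝ) (hC : ∀ t x, C t x = ∫ ω, max (X t ω - x) 0 ∂μ) :
    (∀ s t : ℝ, 0 ≤ s → s ≤ t → ∀ x : ℝ,
      C s x - (condVar μ ℱ X t - condVar μ ℱ X s) ≤ C t x) ∧
    ∀ x : ℝ, MonotoneOn (fun t => C t x + condVar μ ℱ X t) (Ici (0:ℝ)) := by
  obtain ⟨_, hadp, hint, hbdd⟩ := hqm
  have key : ∀ s t : ℝ, 0 ≤ s → s ≤ t → ∀ x : ℝ,
      C s x - (condVar μ ℱ X t - condVar μ ℱ X s) ≤ C t x := by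
    intro s t hs hst x
    set ξ : Ω → ℝ := fun ω => if x < X s ω then 1 else 0 with hξdef
    have hξmeas : @Measurable Ω ℝ (ℱ s) _ ξ := by
      have hXs : @Measurable Ω ℝ (ℱ s) _ (X s) := hadp s
      have hset : MeasurableSet[ℱ s] {ω | x < X s ω} := hXs measurableSet_Ioi
      exact Measurable.ite hset
        (@measurable_const ℝ Ω _ (ℱ s) 1) (@measurable_const ℝ Ω _ (ℱ s) 0)
    have hξbd : ∀ ω, |ξ ω| ≤ 1 := by
      intro ω; by_cases h : x < X s ω <;> simp [hξdef, h]
    have hηmeas : @Measurable Ω ℝ (ℱ s) _ (fun ω => -ξ ω) := hξmeas.neg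
    have hηbd : ∀ ω, |(-ξ ω : ℝ)| ≤ 1 := fun ω => by simpa using hξbd ω
    -- Var bound
    have hB : condVar μ ℱ X s + ∫ ω, (-ξ ω) * (X t ω - X s ω) ∂μ ≤ condVar μ ℱ X t := by
      have h1 : condVar μ ℱ X s ≤
          condVar μ ℱ X t - ∫ ω, (-ξ ω) * (X t ω - X s ω) ∂μ := by
        refine csSup_le ⟨0, zero_mem_simpleVals μ ℱ X hs⟩ (fun v hv => ?_)
        have := le_csSup (hbdd t)
          (mem_simpleVals_add μ ℱ X hint hs hst hηmeas hηbd hv)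
        have h2 : v + ∫ ω, (-ξ ω) * (X t ω - X s ω) ∂μ ≤ condVar μ ℱ X t := this
        linarith
      linarith
    have hInt : Integrable (fun ω => ξ ω * (X t ω - X s ω)) μ :=
      integrable_term μ ℱ X hint hξmeas hξbd t s
    have hneg : ∫ ω, (-ξ ω) * (X t ω - X s ω) ∂μ
        = - ∫ ω, ξ ω * (X t ω - X s ω) ∂μ := by
      rw [← integral_neg]; congr 1; funext ω; ring
    -- pointwise convexity inequality
    have hpt : ∀ ω, max (X s ω - x) 0 + ξ ω * (X t ω - X s ω) ≤ max (X t ω - x) 0 := by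
      intro ω
      by_cases h : x < X s ω
      · have h1 : max (X s ω - x) 0 = X s ω - x := max_eq_left (by linarith)
        have h2 : X t ω - x ≤ max (X t ω - x) 0 := le_max_left _ _
        simp only [hξdef, if_pos h, one_mul, h1]
        linarith
      · have h1 : max (X s ω - x) 0 = 0 := max_eq_right (by push_neg at h; linarith)
        simp only [hξdef, if_neg h, zero_mul, add_zero, h1]
        exact le_max_right _ _
    have hgs : Integrable (fun ω => max (X s ω - x) 0) μ :=
      ((hint s).sub (integrable_const x)).pos_part
    have hgt : Integrable (fun ω => max (X t ω - x) 0) μ :=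
      ((hint t).sub (integrable_const x)).pos_part
    have hmono : ∫ ω, (max (X s ω - x) 0 + ξ ω * (X t ω - X s ω)) ∂μ
        ≤ ∫ ω, max (X t ω - x) 0 ∂μ :=
      integral_mono (hgs.add hInt) hgt hpt
    rw [integral_add hgs hInt] at hmono
    rw [hC s x, hC t x]
    rw [hneg] at hB
    linarith
  refine ⟨key, fun x => ?_⟩
  intro a ha b hb hab
  have := key a b ha hab x
  simp only
  linarith
end
end

section
/- Let X be a quasimartingale of class (DL) with C(t,x) = E[(X_t - x)_+]. Then for any K_0 < K_1 and T > 0, the total variation of t ↦ C(t,x) on [0,T], integrated in x over [K_0, K_1], is finite; specifically ∫_{K_0}^{K_1} ∫_0^T |d_t C(t,x)| dx ≤ ∫_{K_0}^{K_1} (C(T,x) + 2 Var_X(T)) dx < ∞. -/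
open MeasureTheory Filter Set Function Topology

noncomputable section

open GBE MeasureTheory Set

section AuxStmt3

variable {Ω : Type*} {m0 : MeasurableSpace Ω}

/-- Convexity inequality: `1_{a > x} (b - a) ≤ (b-x)_+ - (a-x)_+`. -/
private lemma pointwise_ineq (x a b : ℝ) :
    (if x < a then (1:ℝ) else 0) * (b - a) ≤ max (b - x) 0 - max (a - x) 0 := by
  split_ifs with h
  · rw [max_eq_left (by linarith : (0:ℝ) ≤ a - x)]
    have := le_max_left (b - x) (0:ℝ)
    linarith
  · rw [max_eq_right (by linarith : a - x ≤ (0:ℝ))]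
    have := le_max_right (b - x) (0:ℝ)
    linarith

private lemma condVar_nonneg (μ : Measure Ω) (ℱ : Filtration ℝ m0) (X : ℝ → Ω → ℝ)
    (T : ℝ) (hT : 0 ≤ T) (hbdd : BddAbove (simpleVals μ ℱ X T)) :
    0 ≤ condVar μ ℱ X T := by
  have h0 : (0:ℝ) ∈ simpleVals μ ℱ X T := by
    refine ⟨0, fun _ => 0, fun i => i.elim0, monotone_const, fun i => ⟨le_rfl, hT⟩,
      fun i => i.elim0, ?_⟩
    simp
  exact le_csSup hbdd h0

/-- The key probabilistic bound: the sum of negative parts of the increments of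
`t ↦ C(t,x)` along a partition of `[0,T]` is bounded by the conditional variation. -/
private lemma negpart_sum_le (μ : Measure Ω) [IsProbabilityMeasure μ] (ℱ : Filtration ℝ m0)
    (X : ℝ → Ω → ℝ) (hqm : IsQuasimartingale μ ℱ X)
    (C : ℝ → ℝ → ℝ) (hC : ∀ t x, C t x = ∫ ω, max (X t ω - x) 0 ∂μ)
    (T : ℝ) (x : ℝ) (m : ℕ) (w : ℕ → ℝ) (hw : Monotone w)
    (hmem : ∀ i, w i ∈ Icc 0 T) :
    ∑ i ∈ Finset.range m, max (C (w i) x - C (w (i+1)) x) 0 ≤ condVar μ ℱ X T := by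
  obtain ⟨-, hadapt, hint, hbdd⟩ := hqm
  -- the simple previsible integrand
  set ξ : Fin m → Ω → ℝ := fun i ω =>
    if C (w ((i:ℕ)+1)) x < C (w (i:ℕ)) x then
      (if x < X (w (i:ℕ)) ω then (-1:ℝ) else 0) else 0 with hξdef
  have hXmeas : ∀ a : ℝ, Measurable (X a) :=
    fun a => (Measurable.mono (hadapt a) (ℱ.le a) le_rfl)
  have hYint : ∀ t : ℝ, Integrable (fun ω => max (X t ω - x) 0) μ :=
    fun t => ((hint t).sub (integrable_const x)).pos_part
  have hindint : ∀ a b : ℝ,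
      Integrable (fun ω => (if x < X a ω then (1:ℝ) else 0) * (X b ω - X a ω)) μ := by
    intro a b
    refine Integrable.bdd_mul (c := 1) ((hint b).sub (hint a)) ?_ (ae_of_all _ fun ω => ?_)
    · exact (Measurable.ite (measurableSet_lt measurable_const (hXmeas a))
        measurable_const measurable_const).aestronglyMeasurable
    · split_ifs <;> simp
  have hkey : ∀ a b : ℝ,
      ∫ ω, (if x < X a ω then (1:ℝ) else 0) * (X b ω - X a ω) ∂μ ≤ C b x - C a x := by
    intro a b
    rw [hC b x, hC a x, ← integral_sub (hYint b) (hYint a)]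
    exact integral_mono (hindint a b) ((hYint b).sub (hYint a))
      (fun ω => pointwise_ineq x (X a ω) (X b ω))
  have hξmeas : ∀ i : Fin m, Measurable[ℱ (w (i:ℕ))] (ξ i) := by
    intro i
    by_cases hc : C (w ((i:ℕ)+1)) x < C (w (i:ℕ)) x
    · simp only [hξdef, if_pos hc]
      exact Measurable.ite (measurableSet_lt measurable_const (hadapt (w (i:ℕ))))
        measurable_const measurable_const
    · simp only [hξdef, if_neg hc]
      exact measurable_const
  have hξbdd : ∀ (i : Fin m) (ω : Ω), |ξ i ω| ≤ 1 := by
    intro i ω; simp only [hξdef]; split_ifs <;> norm_num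
  have hξint : ∀ i : Fin m,
      Integrable (fun ω => ξ i ω * (X (w ((i:ℕ)+1)) ω - X (w (i:ℕ)) ω)) μ := by
    intro i
    refine Integrable.bdd_mul (c := 1) ((hint _).sub (hint _)) ?_ (ae_of_all _ fun ω => by
      simpa using hξbdd i ω)
    exact (((hξmeas i).mono (ℱ.le _) le_rfl)).aestronglyMeasurable
  have term_le : ∀ i : Fin m, max (C (w (i:ℕ)) x - C (w ((i:ℕ)+1)) x) 0
      ≤ ∫ ω, ξ i ω * (X (w ((i:ℕ)+1)) ω - X (w (i:ℕ)) ω) ∂μ := by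
    intro i
    by_cases hc : C (w ((i:ℕ)+1)) x < C (w (i:ℕ)) x
    · have hrw : (fun ω => ξ i ω * (X (w ((i:ℕ)+1)) ω - X (w (i:ℕ)) ω))
          = fun ω => -((if x < X (w (i:ℕ)) ω then (1:ℝ) else 0)
              * (X (w ((i:ℕ)+1)) ω - X (w (i:ℕ)) ω)) := by
        funext ω; simp only [hξdef, if_pos hc]; split_ifs <;> ring
      rw [hrw, integral_neg, max_eq_left (sub_nonneg.2 hc.le)]
      have := hkey (w (i:ℕ)) (w ((i:ℕ)+1))
      linarith
    · have hrw : (fun ω => ξ i ω * (X (w ((i:ℕ)+1)) ω - X (w (i:ℕ)) ω))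
          = fun _ => (0:ℝ) := by
        funext ω; simp only [hξdef, if_neg hc]; ring
      rw [hrw, integral_zero, max_eq_right (by linarith [not_lt.1 hc])]
  have hsum : ∑ i ∈ Finset.range m, max (C (w i) x - C (w (i+1)) x) 0
      ≤ ∫ ω, ∑ i : Fin m, ξ i ω * (X (w ((i:ℕ)+1)) ω - X (w (i:ℕ)) ω) ∂μ := by
    rw [integral_finset_sum _ (fun i _ => hξint i),
      ← Fin.sum_univ_eq_sum_range (fun i => max (C (w i) x - C (w (i+1)) x) 0) m]
    exact Finset.sum_le_sum fun i _ => term_le i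
  have hmemS : (∫ ω, ∑ i : Fin m, ξ i ω * (X (w ((i:ℕ)+1)) ω - X (w (i:ℕ)) ω) ∂μ)
      ∈ simpleVals μ ℱ X T := by
    refine ⟨m, fun i => w (i:ℕ), ξ, ?_, ?_, ?_, ?_⟩
    · intro i j hij; exact hw (by exact_mod_cast hij)
    · intro i; exact ⟨(hmem _).1, (hmem _).2⟩
    · intro i
      constructor
      · show @Measurable Ω ℝ (ℱ (w ((i.castSucc : Fin (m+1)) : ℕ))) _ (ξ i)
        rw [Fin.coe_castSucc]
        exact hξmeas i
      · exact hξbdd i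
    · simp only [Fin.val_succ, Fin.coe_castSucc]
  exact hsum.trans (le_csSup (hbdd T) hmemS)

/-- The pathwise (in `x`) variation bound. -/
private lemma evar_le (μ : Measure Ω) [IsProbabilityMeasure μ] (ℱ : Filtration ℝ m0)
    (X : ℝ → Ω → ℝ) (hqm : IsQuasimartingale μ ℱ X)
    (C : ℝ → ℝ → ℝ) (hC : ∀ t x, C t x = ∫ ω, max (X t ω - x) 0 ∂μ)
    (T : ℝ) (hT : 0 ≤ T) (x : ℝ) :
    eVariationOn (fun t => C t x) (Icc 0 T)
      ≤ ENNReal.ofReal (C T x + 2 * condVar μ ℱ X T) := by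
  have hCnn : ∀ t, 0 ≤ C t x := fun t => by
    rw [hC]; exact integral_nonneg fun ω => le_max_right _ _
  rw [eVariationOn]
  refine iSup_le ?_
  rintro ⟨n, u, hu, hus⟩
  set w : ℕ → ℝ := fun i => if i ≤ n then u i else T with hwdef
  have hwmono : Monotone w := by
    refine monotone_nat_of_le_succ (fun i => ?_)
    by_cases h1 : i + 1 ≤ n
    · simp only [hwdef, if_pos h1, if_pos (Nat.le_of_succ_le h1)]
      exact hu (Nat.le_succ i)
    · by_cases h2 : i ≤ n
      · simp only [hwdef, if_pos h2, if_neg h1]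
        exact (hus i).2
      · simp only [hwdef, if_neg h1, if_neg h2, le_refl]
  have hwmem : ∀ i, w i ∈ Icc 0 T := by
    intro i
    by_cases h : i ≤ n
    · simp only [hwdef, if_pos h]; exact hus i
    · simp only [hwdef, if_neg h]; exact right_mem_Icc.2 hT
  have core : ∑ i ∈ Finset.range n, |C (u (i+1)) x - C (u i) x|
      ≤ C T x + 2 * condVar μ ℱ X T := by
    have h1 : ∑ i ∈ Finset.range n, |C (u (i+1)) x - C (u i) x|
        = ∑ i ∈ Finset.range n, |C (w (i+1)) x - C (w i) x| := by
      refine Finset.sum_congr rfl (fun i hi => ?_)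
      have hi' := Finset.mem_range.1 hi
      simp only [hwdef, if_pos (Nat.succ_le_of_lt hi'), if_pos hi'.le]
    have h2 : ∑ i ∈ Finset.range n, |C (w (i+1)) x - C (w i) x|
        ≤ ∑ i ∈ Finset.range (n+1), |C (w (i+1)) x - C (w i) x| :=
      Finset.sum_le_sum_of_subset_of_nonneg (Finset.range_subset_range.2 (Nat.le_succ n))
        (fun i _ _ => abs_nonneg _)
    have h3 : ∀ a : ℝ, |a| = a + 2 * max (-a) 0 := by
      intro a
      rcases le_total 0 a with h | h
      · rw [abs_of_nonneg h, max_eq_right (neg_nonpos.2 h)]; ring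
      · rw [abs_of_nonpos h, max_eq_left (neg_nonneg.2 h)]; ring
    have h4 : ∑ i ∈ Finset.range (n+1), |C (w (i+1)) x - C (w i) x|
        = (C (w (n+1)) x - C (w 0) x)
          + 2 * ∑ i ∈ Finset.range (n+1), max (C (w i) x - C (w (i+1)) x) 0 := by
      have : ∀ i ∈ Finset.range (n+1), |C (w (i+1)) x - C (w i) x|
          = (C (w (i+1)) x - C (w i) x) + 2 * max (C (w i) x - C (w (i+1)) x) 0 := by
        intro i _
        rw [h3 (C (w (i+1)) x - C (w i) x), neg_sub]
      rw [Finset.sum_congr rfl this, Finset.sum_add_distrib,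
        Finset.sum_range_sub (fun i => C (w i) x), ← Finset.mul_sum]
    have h5 := negpart_sum_le μ ℱ X ⟨hqm.1, hqm.2.1, hqm.2.2.1, hqm.2.2.2⟩ C hC T x (n+1)
      w hwmono hwmem
    have h6 : w (n+1) = T := by
      simp only [hwdef, if_neg (Nat.not_succ_le_self n)]
    have h7 := hCnn (w 0)
    rw [h1]
    rw [h6] at h4
    linarith [h2, h4.le, h4.ge]
  calc ∑ i ∈ Finset.range n, edist ((fun t => C t x) (u (i+1))) ((fun t => C t x) (u i))
      = ENNReal.ofReal (∑ i ∈ Finset.range n, |C (u (i+1)) x - C (u i) x|) := by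
        rw [ENNReal.ofReal_sum_of_nonneg (fun i _ => abs_nonneg _)]
        exact Finset.sum_congr rfl fun i _ => by rw [edist_dist, Real.dist_eq]
    _ ≤ ENNReal.ofReal (C T x + 2 * condVar μ ℱ X T) := ENNReal.ofReal_le_ofReal core

end AuxStmt3

/-- for a class (DL) quasimartingale, the variation in `t` of `C(t,x)`
on `[0,T]`, integrated in `x` over `[K₀,K₁]`, is bounded by
`∫ (C(T,x) + 2 Var_X(T)) dx` and is finite. -/
theorem stmt3 {Ω : Type*} {m0 : MeasurableSpace Ω} (μ : Measure Ω) [IsProbabilityMeasure μ]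
    (ℱ : Filtration ℝ m0) (X : ℝ → Ω → ℝ)
    (hqm : IsQuasimartingale μ ℱ X) (hDL : ClassDL μ ℱ X)
    (C : ℝ → ℝ → ℝ) (hC : ∀ t x, C t x = ∫ ω, max (X t ω - x) 0 ∂μ)
    (K₀ K₁ T : ℝ) (hK : K₀ < K₁) (hT : 0 < T) :
    (∫⁻ x in Icc K₀ K₁, eVariationOn (fun t => C t x) (Icc 0 T))
      ≤ ENNReal.ofReal (∫ x in K₀..K₁, (C T x + 2 * condVar μ ℱ X T)) ∧
    (∫⁻ x in Icc K₀ K₁, eVariationOn (fun t => C t x) (Icc 0 T)) < ⊤ := by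
  have hint := hqm.2.2.1
  have hbdd := hqm.2.2.2
  have hA : ∀ x : ℝ, eVariationOn (fun t => C t x) (Icc 0 T)
      ≤ ENNReal.ofReal (C T x + 2 * condVar μ ℱ X T) :=
    fun x => evar_le μ ℱ X hqm C hC T hT.le x
  set g : ℝ → ℝ := fun x => C T x + 2 * condVar μ ℱ X T with hgdef
  have hYint : ∀ x : ℝ, Integrable (fun ω => max (X T ω - x) 0) μ :=
    fun x => ((hint T).sub (integrable_const x)).pos_part
  have hanti : Antitone g := by
    intro a b hab
    have : C T b ≤ C T a := by
      rw [hC, hC]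
      exact integral_mono (hYint b) (hYint a)
        (fun ω => max_le_max (by linarith) le_rfl)
    simp only [hgdef]
    linarith
  have hgnn : ∀ x : ℝ, 0 ≤ g x := by
    intro x
    have h1 : 0 ≤ C T x := by
      rw [hC]; exact integral_nonneg fun ω => le_max_right _ _
    have h2 := condVar_nonneg μ ℱ X T hT.le (hbdd T)
    simp only [hgdef]
    linarith
  have hii : IntervalIntegrable g volume K₀ K₁ := (hanti.antitoneOn _).intervalIntegrable
  have hIoc : IntegrableOn g (Ioc K₀ K₁) := by
    rw [intervalIntegrable_iff_integrableOn_Ioc_of_le hK.le] at hii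
    exact hii
  have hIcc : IntegrableOn g (Icc K₀ K₁) := (integrableOn_Icc_iff_integrableOn_Ioc (by finiteness)).2 hIoc
  have key : (∫⁻ x in Icc K₀ K₁, eVariationOn (fun t => C t x) (Icc 0 T))
      ≤ ENNReal.ofReal (∫ x in K₀..K₁, (C T x + 2 * condVar μ ℱ X T)) := by
    have h1 : (∫⁻ x in Icc K₀ K₁, eVariationOn (fun t => C t x) (Icc 0 T))
        ≤ ∫⁻ x in Icc K₀ K₁, ENNReal.ofReal (g x) := lintegral_mono fun x => hA x
    have h2 : (∫⁻ x in Icc K₀ K₁, ENNReal.ofReal (g x))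
        = ENNReal.ofReal (∫ x in Icc K₀ K₁, g x) :=
      (ofReal_integral_eq_lintegral_ofReal hIcc (ae_of_all _ hgnn)).symm
    have h3 : (∫ x in K₀..K₁, (C T x + 2 * condVar μ ℱ X T)) = ∫ x in Icc K₀ K₁, g x := by
      rw [intervalIntegral.integral_of_le hK.le, integral_Icc_eq_integral_Ioc]
    rw [h3]
    exact h1.trans h2.le
  exact ⟨key, lt_of_le_of_lt key ENNReal.ofReal_lt_top⟩
end
end

section
/- Every càdlàg process of locally finite variation has zero continuous quadratic variation: its quadratic variation [V] exists (as a ucp limit of sums along partitions with mesh tending to 0) and equals the sum of squared jumps, [V]_t = Σ_{s ≤ t} (ΔV_s)². -/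
open MeasureTheory Filter Set Function Topology

noncomputable section

open GBE MeasureTheory Set Filter Function

set_option linter.unusedSectionVars false
set_option maxHeartbeats 1000000

namespace QVAuxTop

lemma meas_progress {Ω : Type*} {m0 : MeasurableSpace Ω} {V : ℝ → Ω → ℝ}
    (hmeas : ∀ t, Measurable (V t))
    (hrc : ∀ ω (t : ℝ), ContinuousWithinAt (fun u => V u ω) (Ici t) t)
    {g : Ω → ℝ} (hg : Measurable g) :
    Measurable (fun ω => V (g ω) ω) := by
  have happrox : ∀ j : ℕ,
      Measurable (fun ω => V (((⌈g ω * (2:ℝ)^j⌉ : ℤ) : ℝ) / 2^j) ω) := by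
    intro j
    have h1 : Measurable (fun ω => (⌈g ω * (2:ℝ)^j⌉ : ℤ)) := (hg.mul measurable_const).ceil
    exact (measurable_from_prod_countable_left (f := fun q : Ω × ℤ => V ((q.2 : ℝ)/2^j) q.1)
      (fun m => by exact hmeas ((m:ℝ)/2^j))).comp (measurable_id.prodMk h1)
  apply measurable_of_tendsto_metrizable happrox
  rw [tendsto_pi_nhds]
  intro ω
  have hcomp := (hrc ω (g ω))
  rw [ContinuousWithinAt] at hcomp
  apply hcomp.comp
  rw [tendsto_nhdsWithin_iff]
  constructor
  · -- tendsto to g ω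
    have hup : Tendsto (fun j : ℕ => g ω + (1/2:ℝ)^j) atTop (𝓝 (g ω + 0)) :=
      tendsto_const_nhds.add (tendsto_pow_atTop_nhds_zero_of_lt_one (by norm_num) (by norm_num))
    rw [add_zero] at hup
    refine tendsto_of_tendsto_of_tendsto_of_le_of_le tendsto_const_nhds hup ?_ ?_
    · intro j
      rw [le_div_iff₀ (by positivity : (0:ℝ) < 2^j)]
      exact Int.le_ceil _
    · intro j
      rw [div_le_iff₀ (by positivity : (0:ℝ) < 2^j)]
      have h2 : ((1:ℝ)/2)^j * 2^j = 1 := by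
        rw [← mul_pow]; norm_num
      have := (Int.ceil_lt_add_one (g ω * (2:ℝ)^j)).le
      calc ((⌈g ω * (2:ℝ)^j⌉ : ℤ) : ℝ) ≤ g ω * 2^j + 1 := this
        _ = (g ω + (1/2)^j) * 2^j := by rw [add_mul, h2]
  · filter_upwards with j
    rw [mem_Ici, le_div_iff₀ (by positivity : (0:ℝ) < 2^j)]
    exact Int.le_ceil _

end QVAuxTop

namespace QVAux

/-- clamp to [0,T] -/
def clamp (T t : ℝ) : ℝ := max 0 (min t T)

lemma clamp_mem {T : ℝ} (hT : 0 ≤ T) (t : ℝ) : clamp T t ∈ Icc 0 T := by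
  constructor
  · exact le_max_left _ _
  · simp [clamp, max_le_iff, min_le_right, hT]

lemma clamp_mono (T : ℝ) : Monotone (clamp T) := fun a b hab => by
  dsimp [clamp]; gcongr

lemma clamp_of_mem {T t : ℝ} (ht : t ∈ Icc 0 T) : clamp T t = t := by
  rcases ht with ⟨h1, h2⟩
  simp [clamp, min_eq_left h2, max_eq_right h1]

/-- real variation on [a,b] -/
def rv (f : ℝ → ℝ) (a b : ℝ) : ℝ := (eVariationOn f (Icc a b)).toReal

/-- cumulative variation function, clamped to [0,T] -/
def vv (f : ℝ → ℝ) (T t : ℝ) : ℝ := rv f 0 (clamp T t)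

variable {f : ℝ → ℝ} {T : ℝ}
variable (hfin : eVariationOn f (Icc 0 T) ≠ ⊤) (hT : 0 ≤ T)

section basic
include hfin

lemma fin' {a b : ℝ} (ha : 0 ≤ a) (hb : b ≤ T) : eVariationOn f (Icc a b) ≠ ⊤ := by
  intro h
  exact hfin (top_le_iff.mp (h ▸ eVariationOn.mono f (Icc_subset_Icc ha hb)))

lemma rv_add {a b c : ℝ} (ha : 0 ≤ a) (hab : a ≤ b) (hbc : b ≤ c) (hc : c ≤ T) :
    rv f a b + rv f b c = rv f a c := by
  have h1 : Icc a c ∩ Icc a b = Icc a b := by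
    rw [inter_eq_right]; exact Icc_subset_Icc le_rfl hbc
  have h2 : Icc a c ∩ Icc b c = Icc b c := by
    rw [inter_eq_right]; exact Icc_subset_Icc hab le_rfl
  have h3 : Icc a c ∩ Icc a c = Icc a c := inter_self _
  have key := eVariationOn.Icc_add_Icc f (s := Icc a c) hab hbc ⟨hab, hbc⟩
  rw [h1, h2, h3] at key
  rw [rv, rv, rv, ← ENNReal.toReal_add (fin' hfin ha (hbc.trans hc)) (fin' hfin (ha.trans hab) hc),
    key]

omit hfin in
lemma rv_nonneg (f : ℝ → ℝ) (a b : ℝ) : 0 ≤ rv f a b := ENNReal.toReal_nonneg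

lemma rv_mono {a b c : ℝ} (ha : 0 ≤ a) (hab : a ≤ b) (hbc : b ≤ c) (hc : c ≤ T) :
    rv f a b ≤ rv f a c := by
  rw [← rv_add hfin ha hab hbc hc]
  exact le_add_of_nonneg_right (rv_nonneg _ _ _)

include hT

lemma vv_mono : Monotone (vv f T) := by
  intro s t hst
  dsimp [vv]
  have h1 := clamp_mem hT s
  have h2 := clamp_mem hT t
  exact rv_mono hfin le_rfl h1.1 (clamp_mono T hst) h2.2

omit hT in
lemma vv_diff {a b : ℝ} (ha : 0 ≤ a) (hab : a ≤ b) (hb : b ≤ T) :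
    vv f T b - vv f T a = rv f a b := by
  have h0 : clamp T a = a := clamp_of_mem ⟨ha, hab.trans hb⟩
  have h1 : clamp T b = b := clamp_of_mem ⟨ha.trans hab, hb⟩
  rw [vv, vv, h0, h1, ← rv_add hfin le_rfl ha hab hb]
  ring

omit hT in
lemma abs_sub_le_rv {a b : ℝ} (hab : a ≤ b) (ha : 0 ≤ a) (hb : b ≤ T) :
    |f b - f a| ≤ rv f a b := by
  have h := eVariationOn.edist_le f (show a ∈ Icc a b from ⟨le_rfl, hab⟩)
      (show b ∈ Icc a b from ⟨hab, le_rfl⟩)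
  have := ENNReal.toReal_mono (fin' hfin ha hb) h
  rwa [edist_dist, ENNReal.toReal_ofReal dist_nonneg, Real.dist_eq, abs_sub_comm] at this

omit hT in
lemma abs_sub_le_vv {a b : ℝ} (hab : a ≤ b) (ha : 0 ≤ a) (hb : b ≤ T) :
    |f b - f a| ≤ vv f T b - vv f T a := by
  rw [vv_diff hfin ha hab hb]; exact abs_sub_le_rv hfin hab ha hb

omit hT in
/-- extraction of a near-optimal partition -/
lemma exists_sum {a b : ℝ} (hab : a ≤ b) (ha : 0 ≤ a) (hb : b ≤ T) {ε : ℝ} (hε : 0 < ε) :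
    ∃ (n : ℕ) (u : ℕ → ℝ), Monotone u ∧ (∀ i, u i ∈ Icc a b) ∧
      rv f a b - ε ≤ ∑ i ∈ Finset.range n, dist (f (u (i + 1))) (f (u i)) := by
  have hfin' := fin' hfin ha hb
  by_cases h0 : eVariationOn f (Icc a b) = 0
  · refine ⟨0, fun _ => a, monotone_const, fun _ => ⟨le_rfl, hab⟩, ?_⟩
    simp [rv, h0]
    linarith
  · have hlt : eVariationOn f (Icc a b) - ENNReal.ofReal ε < eVariationOn f (Icc a b) :=
      ENNReal.sub_lt_self hfin' h0 (by simp [hε])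
    obtain ⟨⟨n, u, hu, hus⟩, hp⟩ := lt_iSup_iff.mp
      (show (eVariationOn f (Icc a b) - ENNReal.ofReal ε) <
        ⨆ p : ℕ × {u : ℕ → ℝ // Monotone u ∧ ∀ i, u i ∈ Icc a b},
          ∑ i ∈ Finset.range p.1, edist (f (p.2.1 (i+1))) (f (p.2.1 i)) from hlt)
    refine ⟨n, u, hu, hus, ?_⟩
    have hsum_le : (∑ i ∈ Finset.range n, edist (f (u (i + 1))) (f (u i))) ≤
        eVariationOn f (Icc a b) := eVariationOn.sum_le (f := f) (n := n) hu hus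
    have hsum_fin : (∑ i ∈ Finset.range n, edist (f (u (i + 1))) (f (u i))) ≠ ⊤ :=
      fun h => hfin' (top_le_iff.mp (h ▸ hsum_le))
    have heq : (∑ i ∈ Finset.range n, edist (f (u (i + 1))) (f (u i))).toReal =
        ∑ i ∈ Finset.range n, dist (f (u (i + 1))) (f (u i)) := by
      rw [ENNReal.toReal_sum (fun i _ => edist_ne_top _ _)]
      exact Finset.sum_congr rfl fun i _ => by rw [edist_dist, ENNReal.toReal_ofReal dist_nonneg]
    rw [← heq]
    have hp' : eVariationOn f (Icc a b) - ENNReal.ofReal ε ≤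
        ∑ i ∈ Finset.range n, edist (f (u (i + 1))) (f (u i)) := hp.le
    have h1 := ENNReal.toReal_mono hsum_fin hp'
    rcases le_or_gt (ENNReal.ofReal ε) (eVariationOn f (Icc a b)) with hc | hc
    · rw [ENNReal.toReal_sub_of_le hc hfin', ENNReal.toReal_ofReal hε.le] at h1
      exact h1
    · have : rv f a b ≤ ε := by
        have := ENNReal.toReal_mono (by simp) hc.le
        rwa [ENNReal.toReal_ofReal hε.le] at this
      calc rv f a b - ε ≤ 0 := by linarith
      _ ≤ _ := ENNReal.toReal_nonneg

/-- partial sums of dists are bounded by variation between points -/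
lemma sum_dist_le {u : ℕ → ℝ} (hu : Monotone u) {k m : ℕ}
    (h0 : 0 ≤ u k) (hT' : u m ≤ T) (hkm : k ≤ m) :
    ∑ i ∈ Finset.Ico k m, dist (f (u (i + 1))) (f (u i)) ≤ rv f (u k) (u m) := by
  have hsum := eVariationOn.sum_le_of_monotoneOn_Icc (f := f) (s := Icc (u k) (u m))
      (hu.monotoneOn _) (fun i hi => ⟨hu hi.1, hu hi.2⟩)
  have hfin2 : eVariationOn f (Icc (u k) (u m)) ≠ ⊤ := fin' hfin h0 hT'
  have := ENNReal.toReal_mono hfin2 hsum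
  rw [ENNReal.toReal_sum (fun i _ => edist_ne_top _ _)] at this
  calc ∑ i ∈ Finset.Ico k m, dist (f (u (i + 1))) (f (u i))
      = ∑ i ∈ Finset.Ico k m, (edist (f (u (i + 1))) (f (u i))).toReal :=
        Finset.sum_congr rfl fun i _ => by rw [edist_dist, ENNReal.toReal_ofReal dist_nonneg]
    _ ≤ rv f (u k) (u m) := this

/-- right continuity of the cumulative variation of a right-continuous function -/
lemma vv_rightLim (hrc : ∀ t : ℝ, ContinuousWithinAt f (Ici t) t) (t : ℝ) :
    rightLim (vv f T) t = vv f T t := by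
  have hmono := vv_mono hfin hT
  refine le_antisymm ?_ (hmono.le_rightLim le_rfl)
  rcases lt_or_ge t 0 with ht0 | ht0
  · have : vv f T (t/2) = vv f T t := by
      have h1 : clamp T (t/2) = 0 := by
        rw [clamp, min_eq_left (by linarith), max_eq_left (by linarith)]
      have h2 : clamp T t = 0 := by
        rw [clamp, min_eq_left (by linarith), max_eq_left (by linarith)]
      rw [vv, vv, h1, h2]
    calc rightLim (vv f T) t ≤ vv f T (t/2) := hmono.rightLim_le (by linarith)
      _ = vv f T t := this
  rcases le_or_gt T t with htT | htT
  · have : vv f T (t+1) = vv f T t := by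
      have h1 : clamp T (t+1) = T := by
        simp [clamp, min_eq_right (by linarith : T ≤ t+1), max_eq_right hT]
      have h2 : clamp T t = T := by
        simp [clamp, min_eq_right htT, max_eq_right hT]
      rw [vv, vv, h1, h2]
    calc rightLim (vv f T) t ≤ vv f T (t+1) := hmono.rightLim_le (by linarith)
      _ = vv f T t := this
  -- main case : 0 ≤ t < T
  refine le_of_forall_pos_le_add fun ε hε => ?_
  have h2ε : rightLim (vv f T) t ≤ vv f T t + 2 * (ε/3) := by
    obtain ⟨δ, hδ, hball⟩ := Metric.tendsto_nhdsWithin_nhds.mp (hrc t) (ε/3) (by linarith)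
    set b := min (t + δ/2) T with hb
    have htb : t < b := lt_min (by linarith) htT
    have hbT : b ≤ T := min_le_right _ _
    have hball' : ∀ x ∈ Icc t b, dist (f x) (f t) ≤ ε/3 := by
      intro x hx
      refine (hball hx.1 ?_).le
      rw [Real.dist_eq, abs_of_nonneg (by linarith [hx.1])]
      have : x ≤ t + δ/2 := hx.2.trans (min_le_left _ _)
      linarith
    set m := rv f t b with hm
    obtain ⟨n, u, hu, hus, hsum⟩ := exists_sum hfin htb.le ht0 hbT (show (0:ℝ) < ε/3 by linarith)
    by_cases hex : ∃ i ≤ n, t < u i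
    · classical
      obtain ⟨iw, hiwn, hiw⟩ := hex
      have hexx : ∃ i, t < u i := ⟨iw, hiw⟩
      set i₀ := Nat.find hexx with hi₀
      have hti₀ : t < u i₀ := Nat.find_spec hexx
      have hlow : ∀ i < i₀, u i = t := fun i hi =>
        le_antisymm (not_lt.mp (Nat.find_min hexx hi)) (hus i).1
      have hi₀n : i₀ ≤ n := by
        by_contra h
        exact absurd (hlow iw (by omega) ▸ hiw) (lt_irrefl t)
      -- split the sum
      have hsplit : ∑ i ∈ Finset.range n, dist (f (u (i+1))) (f (u i)) =
          (∑ i ∈ Finset.range i₀, dist (f (u (i+1))) (f (u i))) +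
          ∑ i ∈ Finset.Ico i₀ n, dist (f (u (i+1))) (f (u i)) := by
        rw [Finset.range_eq_Ico, ← Finset.sum_Ico_consecutive _ (Nat.zero_le _) hi₀n,
          ← Finset.range_eq_Ico]
      have hpre : ∑ i ∈ Finset.range i₀, dist (f (u (i+1))) (f (u i)) ≤ ε/3 := by
        rcases Nat.eq_zero_or_pos i₀ with h0 | h0
        · simp [h0]; linarith
        · rw [Finset.sum_eq_single_of_mem (i₀ - 1) (Finset.mem_range.mpr (by omega))
            (fun j hj hjne => by
              rw [hlow j (Finset.mem_range.mp hj), hlow (j+1) (by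
                have := Finset.mem_range.mp hj; omega)]
              simp)]
          have heq1 : i₀ - 1 + 1 = i₀ := by omega
          rw [heq1, hlow (i₀ - 1) (by omega)]
          exact hball' (u i₀) ⟨hti₀.le, (hus i₀).2⟩
      have hsuf : ∑ i ∈ Finset.Ico i₀ n, dist (f (u (i+1))) (f (u i)) ≤ rv f (u i₀) b := by
        have hun : u i₀ ≤ u n := hu hi₀n
        calc ∑ i ∈ Finset.Ico i₀ n, dist (f (u (i+1))) (f (u i)) ≤ rv f (u i₀) (u n) :=
              sum_dist_le hfin hT hu (ht0.trans (hus i₀).1) ((hus n).2.trans hbT) hi₀n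
          _ ≤ rv f (u i₀) b := rv_mono hfin (ht0.trans (hus i₀).1) hun (hus n).2 hbT
      have key : m - ε/3 ≤ ε/3 + rv f (u i₀) b := by
        rw [hsplit] at hsum; linarith
      have hadd : rv f t (u i₀) + rv f (u i₀) b = m :=
        rv_add hfin ht0 hti₀.le (hus i₀).2 hbT
      have hsmall : rv f t (u i₀) ≤ 2 * (ε/3) := by linarith
      calc rightLim (vv f T) t ≤ vv f T (u i₀) := hmono.rightLim_le hti₀
        _ = vv f T t + rv f t (u i₀) := by
            rw [← vv_diff hfin ht0 hti₀.le ((hus i₀).2.trans hbT)]; ring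
        _ ≤ vv f T t + 2 * (ε/3) := by linarith
    · push_neg at hex
      have hall : ∀ i ≤ n, u i = t := fun i hi => le_antisymm (hex i hi) (hus i).1
      have hzero : ∑ i ∈ Finset.range n, dist (f (u (i+1))) (f (u i)) = 0 := by
        apply Finset.sum_eq_zero
        intro i hi
        have := Finset.mem_range.mp hi
        rw [hall i (by omega), hall (i+1) (by omega)]
        simp
      have hmε : m ≤ ε/3 := by rw [hzero] at hsum; linarith
      calc rightLim (vv f T) t ≤ vv f T b := hmono.rightLim_le htb
        _ = vv f T t + m := by
            have hd := vv_diff hfin ht0 htb.le hbT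
            simp only [hm]; linarith
        _ ≤ vv f T t + 2 * (ε/3) := by linarith
  linarith

/-- the jump of the cumulative variation equals the absolute jump of f -/
lemma vv_leftLim (hll : ∀ t : ℝ, Tendsto f (𝓝[<] t) (𝓝 (leftLim f t)))
    {s : ℝ} (hs0 : 0 < s) (hsT : s ≤ T) :
    vv f T s - leftLim (vv f T) s = |f s - leftLim f s| := by
  have hmono := vv_mono hfin hT
  have hne : (𝓝[<] s).NeBot := inferInstance
  set G := leftLim f s with hG
  -- lower bound
  have hlower : |f s - G| ≤ vv f T s - leftLim (vv f T) s := by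
    have hev : ∀ᶠ u in 𝓝[<] s, |f s - f u| ≤ vv f T s - vv f T u := by
      filter_upwards [Ioo_mem_nhdsLT_of_mem (show s ∈ Ioc 0 s from ⟨hs0, le_rfl⟩)] with u hu
      exact abs_sub_le_vv hfin hu.2.le hu.1.le hsT
    have h1 : Tendsto (fun u => |f s - f u|) (𝓝[<] s) (𝓝 (|f s - G|)) := by
      exact ((tendsto_const_nhds.sub (hll s)).abs)
    have h2 : Tendsto (fun u => vv f T s - vv f T u) (𝓝[<] s)
        (𝓝 (vv f T s - leftLim (vv f T) s)) :=
      tendsto_const_nhds.sub (hmono.tendsto_leftLim s)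
    exact le_of_tendsto_of_tendsto h1 h2 hev
  -- upper bound
  have hupper : ∀ ε > (0:ℝ), vv f T s - leftLim (vv f T) s ≤ |f s - G| + 2*ε := by
    intro ε hε
    obtain ⟨δ, hδ, hball⟩ := Metric.tendsto_nhdsWithin_nhds.mp (hll s) ε hε
    set u₀ := max 0 (s - δ/2) with hu₀
    have hu₀0 : 0 ≤ u₀ := le_max_left _ _
    have hu₀s : u₀ < s := by
      rw [hu₀, max_lt_iff]; exact ⟨hs0, by linarith⟩
    have hball' : ∀ x ∈ Ico u₀ s, dist (f x) G ≤ ε := by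
      intro x hx
      refine (hball hx.2 ?_).le
      rw [Real.dist_eq, abs_of_nonpos (by linarith [hx.2])]
      have : s - δ/2 ≤ x := (le_max_right _ _).trans hx.1
      linarith
    set m := rv f u₀ s with hm
    obtain ⟨n, u, hu, hus, hsum⟩ := exists_sum hfin hu₀s.le hu₀0 hsT hε
    have husT : ∀ i, u i ≤ T := fun i => (hus i).2.trans hsT
    have hus0 : ∀ i, 0 ≤ u i := fun i => hu₀0.trans (hus i).1
    have hgoal : m - ε ≤ (leftLim (vv f T) s - vv f T u₀) + (|f s - G| + ε) := by
      by_cases hex : ∃ i, u i = s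
      · classical
        set i₁ := Nat.find hex with hi₁def
        have hi₁ : u i₁ = s := Nat.find_spec hex
        have hlt : ∀ i < i₁, u i < s := fun i hi =>
          lt_of_le_of_ne (hus i).2 (Nat.find_min hex hi)
        rcases Nat.eq_zero_or_pos i₁ with h0 | hpos
        ·
          -- u i ≥ u 0 = s and ≤ s so u i = s for all i; sum = 0
          have hall : ∀ i, u i = s := fun i =>
            le_antisymm (hus i).2 (by rw [← hi₁, h0] at *; exact hu (Nat.zero_le i))
          have hzero : ∑ i ∈ Finset.range n, dist (f (u (i+1))) (f (u i)) = 0 :=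
            Finset.sum_eq_zero fun i _ => by rw [hall i, hall (i+1)]; simp
          rw [hzero] at hsum
          have h1 : vv f T u₀ ≤ leftLim (vv f T) s := hmono.le_leftLim hu₀s
          have h2 : 0 ≤ |f s - G| := abs_nonneg _
          linarith
        · -- i₁ ≥ 1
          set k := min i₁ n with hk
          have hsuffix : ∑ i ∈ Finset.Ico k n, dist (f (u (i+1))) (f (u i)) = 0 := by
            apply Finset.sum_eq_zero
            intro i hi
            have hik := (Finset.mem_Ico.mp hi).1
            have hii : i₁ ≤ i := by
              rcases Finset.mem_Ico.mp hi with ⟨h1, h2⟩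
              omega
            have h1 : u i = s := le_antisymm (hus i).2 (hi₁ ▸ hu hii)
            have h2 : u (i+1) = s := le_antisymm (hus (i+1)).2 (hi₁ ▸ hu (hii.trans (Nat.le_succ i)))
            rw [h1, h2]; simp
          have hsplit : ∑ i ∈ Finset.range n, dist (f (u (i+1))) (f (u i)) =
              ∑ i ∈ Finset.range k, dist (f (u (i+1))) (f (u i)) := by
            rw [Finset.range_eq_Ico, ← Finset.sum_Ico_consecutive _ (Nat.zero_le k) (min_le_right i₁ n),
              ← Finset.range_eq_Ico, hsuffix]
            ring
          rcases le_or_gt i₁ n with hin | hin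
          · -- k = i₁, crossing term at i₁ - 1
            have hkk : k = i₁ := min_eq_left hin
            have hcross : dist (f (u i₁)) (f (u (i₁ - 1))) ≤ |f s - G| + ε := by
              rw [hi₁]
              calc dist (f s) (f (u (i₁ - 1))) ≤ dist (f s) G + dist G (f (u (i₁-1))) :=
                    dist_triangle _ _ _
                _ ≤ |f s - G| + ε := by
                    rw [Real.dist_eq]
                    have := hball' (u (i₁ -1)) ⟨(hus _).1, hlt _ (by omega)⟩
                    rw [dist_comm] at this
                    linarith
            have hpre : ∑ i ∈ Finset.range (i₁ - 1), dist (f (u (i+1))) (f (u i)) ≤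
                leftLim (vv f T) s - vv f T u₀ := by
              have h1 : ∑ i ∈ Finset.range (i₁ - 1), dist (f (u (i+1))) (f (u i)) =
                  ∑ i ∈ Finset.Ico 0 (i₁ - 1), dist (f (u (i+1))) (f (u i)) := by
                rw [Finset.range_eq_Ico]
              rw [h1]
              calc ∑ i ∈ Finset.Ico 0 (i₁-1), dist (f (u (i+1))) (f (u i))
                  ≤ rv f (u 0) (u (i₁ - 1)) :=
                    sum_dist_le hfin hT hu (hus0 0) (husT _) (Nat.zero_le _)
                _ ≤ vv f T (u (i₁ -1)) - vv f T (u 0) := by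
                    rw [vv_diff hfin (hus0 0) (hu (Nat.zero_le _)) (husT _)]
                _ ≤ leftLim (vv f T) s - vv f T u₀ := by
                    have ha := hmono.le_leftLim (hlt (i₁ - 1) (by omega))
                    have hb : vv f T u₀ ≤ vv f T (u 0) := hmono (hus 0).1
                    linarith
            have hdecomp : ∑ i ∈ Finset.range k, dist (f (u (i+1))) (f (u i)) =
                ∑ i ∈ Finset.range (i₁ - 1), dist (f (u (i+1))) (f (u i)) +
                  dist (f (u (i₁ - 1 + 1))) (f (u (i₁ - 1))) := by
              rw [hkk]
              have : i₁ = (i₁ - 1) + 1 := by omega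
              rw [this, Finset.sum_range_succ]
              congr 1 <;> omega
            have heq1 : i₁ - 1 + 1 = i₁ := by omega
            rw [hsplit, hdecomp, heq1] at hsum
            linarith
          · -- k = n < i₁ : no crossing, all points < s
            have hkk : k = n := min_eq_right hin.le
            have hbound : ∑ i ∈ Finset.range n, dist (f (u (i+1))) (f (u i)) ≤
                leftLim (vv f T) s - vv f T u₀ := by
              rw [Finset.range_eq_Ico]
              calc ∑ i ∈ Finset.Ico 0 n, dist (f (u (i+1))) (f (u i))
                  ≤ rv f (u 0) (u n) := sum_dist_le hfin hT hu (hus0 0) (husT _) (Nat.zero_le _)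
                _ ≤ vv f T (u n) - vv f T (u 0) := by
                    rw [vv_diff hfin (hus0 0) (hu (Nat.zero_le _)) (husT _)]
                _ ≤ leftLim (vv f T) s - vv f T u₀ := by
                    have ha := hmono.le_leftLim (hlt n hin)
                    have hb : vv f T u₀ ≤ vv f T (u 0) := hmono (hus 0).1
                    linarith
            have h2 : 0 ≤ |f s - G| := abs_nonneg _
            linarith
      · push_neg at hex
        have hltall : ∀ i, u i < s := fun i => lt_of_le_of_ne (hus i).2 (hex i)
        have hbound : ∑ i ∈ Finset.range n, dist (f (u (i+1))) (f (u i)) ≤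
            leftLim (vv f T) s - vv f T u₀ := by
          rw [Finset.range_eq_Ico]
          calc ∑ i ∈ Finset.Ico 0 n, dist (f (u (i+1))) (f (u i))
              ≤ rv f (u 0) (u n) := sum_dist_le hfin hT hu (hus0 0) (husT _) (Nat.zero_le _)
            _ ≤ vv f T (u n) - vv f T (u 0) := by
                rw [vv_diff hfin (hus0 0) (hu (Nat.zero_le _)) (husT _)]
            _ ≤ leftLim (vv f T) s - vv f T u₀ := by
                have ha := hmono.le_leftLim (hltall n)
                have hb : vv f T u₀ ≤ vv f T (u 0) := hmono (hus 0).1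
                linarith
        have h2 : 0 ≤ |f s - G| := abs_nonneg _
        linarith
    have hmd : m = vv f T s - vv f T u₀ := by
      rw [vv_diff hfin hu₀0 hu₀s.le hsT]
    linarith
  refine le_antisymm ?_ hlower
  by_contra hcon
  push_neg at hcon
  obtain ⟨ε, hε, hlt⟩ : ∃ ε > (0:ℝ), |f s - G| + 2*ε < vv f T s - leftLim (vv f T) s := by
    refine ⟨(vv f T s - leftLim (vv f T) s - |f s - G|)/4, by linarith, by linarith⟩
  exact absurd (hupper _ hε) (not_le.mpr hlt)

omit hfin hT in
lemma vv_leftLim_zero : leftLim (vv f T) 0 = vv f T 0 := by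
  have hzero : ∀ x ≤ (0:ℝ), vv f T x = vv f T 0 := by
    intro x hx
    rw [vv, vv, clamp, clamp, max_eq_left ((min_le_left x T).trans hx),
      max_eq_left (min_le_left 0 T)]
  have : Tendsto (vv f T) (𝓝[<] (0:ℝ)) (𝓝 (vv f T 0)) := by
    apply Tendsto.congr' _ tendsto_const_nhds
    filter_upwards [self_mem_nhdsWithin] with x hx
    exact (hzero x (le_of_lt hx)).symm
  exact leftLim_eq_of_tendsto this

/-- the largest absolute jump of `f` in the interval `Ioc a b` (or `0`) -/
def bigJ (f : ℝ → ℝ) (a b : ℝ) : ℝ :=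
  sSup (insert 0 ((fun x => |f x - leftLim f x|) '' Ioc a b))

include hfin hT

lemma aj_le (hll : ∀ t : ℝ, Tendsto f (𝓝[<] t) (𝓝 (leftLim f t)))
    {a b x : ℝ} (ha : 0 ≤ a) (hbT : b ≤ T) (hx : x ∈ Ioc a b) :
    |f x - leftLim f x| ≤ vv f T b - vv f T a := by
  have h1 := vv_leftLim hfin hT hll (lt_of_le_of_lt ha hx.1) (hx.2.trans hbT)
  have h2 : vv f T x ≤ vv f T b := vv_mono hfin hT hx.2
  have h3 : vv f T a ≤ leftLim (vv f T) x := (vv_mono hfin hT).le_leftLim hx.1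
  linarith

lemma bigJ_bdd (hll : ∀ t : ℝ, Tendsto f (𝓝[<] t) (𝓝 (leftLim f t)))
    {a b : ℝ} (ha : 0 ≤ a) (hab : a ≤ b) (hbT : b ≤ T) :
    BddAbove (insert 0 ((fun x => |f x - leftLim f x|) '' Ioc a b)) := by
  refine ⟨vv f T b - vv f T a, ?_⟩
  rintro y (rfl | ⟨x, hx, rfl⟩)
  · have := vv_mono hfin hT hab; simp; linarith
  · exact aj_le hfin hT hll ha hbT hx

omit hfin hT in
lemma bigJ_nonneg (a b : ℝ) (hbdd : BddAbove (insert 0 ((fun x => |f x - leftLim f x|) '' Ioc a b))) :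
    0 ≤ bigJ f a b :=
  le_csSup hbdd (mem_insert _ _)

omit hfin hT in
lemma le_bigJ {a b x : ℝ} (hx : x ∈ Ioc a b)
    (hbdd : BddAbove (insert 0 ((fun x => |f x - leftLim f x|) '' Ioc a b))) :
    |f x - leftLim f x| ≤ bigJ f a b :=
  le_csSup hbdd (mem_insert_of_mem _ (mem_image_of_mem _ hx))

/-- key oscillation lemma: on small intervals, the variation is at most δ plus one jump -/
lemma osc (hrc : ∀ t : ℝ, ContinuousWithinAt f (Ici t) t)
    (hll : ∀ t : ℝ, Tendsto f (𝓝[<] t) (𝓝 (leftLim f t)))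
    {δ : ℝ} (hδ : 0 < δ) :
    ∃ η > (0:ℝ), ∀ a b, 0 ≤ a → a ≤ b → b ≤ T → b - a ≤ η →
      vv f T b - vv f T a ≤ δ + bigJ f a b := by
  have hmono := vv_mono hfin hT
  by_contra hcon
  push_neg at hcon
  have h' : ∀ n : ℕ, ∃ a b, 0 ≤ a ∧ a ≤ b ∧ b ≤ T ∧ b - a ≤ 1/(n+1) ∧
      δ + bigJ f a b < vv f T b - vv f T a := by
    intro n
    obtain ⟨a, b, ha, hab, hbT, hmesh, hgt⟩ := hcon (1/(n+1)) (by positivity)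
    exact ⟨a, b, ha, hab, hbT, hmesh, hgt⟩
  choose a b ha hab hbT hmesh hgt using h'
  obtain ⟨sstar, hsstar, φ, hφ, hconv⟩ := (isCompact_Icc (a := (0:ℝ)) (b := T)).tendsto_subseq
    (fun n => ⟨ha n, (hab n).trans (hbT n)⟩ : ∀ n, a n ∈ Icc 0 T)
  have hone : Tendsto (fun n => 1/((φ n : ℝ)+1)) atTop (𝓝 0) := by
    have h1 : Tendsto (fun n : ℕ => 1/((n : ℝ)+1)) atTop (𝓝 0) :=
      tendsto_one_div_add_atTop_nhds_zero_nat
    exact h1.comp hφ.tendsto_atTop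
  have hbconv : Tendsto (b ∘ φ) atTop (𝓝 sstar) := by
    have hup : Tendsto (fun n => a (φ n) + 1/((φ n : ℝ)+1)) atTop (𝓝 (sstar + 0)) :=
      hconv.add hone
    rw [add_zero] at hup
    refine tendsto_of_tendsto_of_tendsto_of_le_of_le hconv hup ?_ ?_
    · exact fun n => hab (φ n)
    · exact fun n => by have := hmesh (φ n); dsimp; linarith
  set ε := δ/3 with hε
  -- right control
  have hR : ∃ uu > sstar, ∀ x, sstar ≤ x → x ≤ uu → vv f T x ≤ vv f T sstar + ε := by
    have h1 : Tendsto (vv f T) (𝓝[>] sstar) (𝓝 (vv f T sstar)) := by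
      have := hmono.tendsto_rightLim sstar
      rwa [vv_rightLim hfin hT hrc] at this
    have h2 : ∀ᶠ x in 𝓝[>] sstar, vv f T x ≤ vv f T sstar + ε := by
      filter_upwards [h1.eventually_le_const (show vv f T sstar < vv f T sstar + ε by linarith)]
        with x hx using hx
    obtain ⟨uu, huu, hsub⟩ := mem_nhdsGT_iff_exists_Ioc_subset.mp h2
    exact ⟨uu, huu, fun x hx1 hx2 => by
      rcases eq_or_lt_of_le hx1 with rfl | hlt
      · linarith
      · exact hsub ⟨hlt, hx2⟩⟩
  -- left control
  have hL : ∃ ll < sstar, ∀ x, ll ≤ x → x < sstar → leftLim (vv f T) sstar - ε ≤ vv f T x := by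
    have h1 : Tendsto (vv f T) (𝓝[<] sstar) (𝓝 (leftLim (vv f T) sstar)) :=
      hmono.tendsto_leftLim sstar
    have h2 : ∀ᶠ x in 𝓝[<] sstar, leftLim (vv f T) sstar - ε ≤ vv f T x := by
      filter_upwards [h1.eventually_const_le
        (show leftLim (vv f T) sstar - ε < leftLim (vv f T) sstar by linarith)]
        with x hx using hx
    obtain ⟨ll, hll2, hsub⟩ := mem_nhdsLT_iff_exists_Ico_subset.mp h2
    exact ⟨ll, hll2, fun x hx1 hx2 => hsub ⟨hx1, hx2⟩⟩
  obtain ⟨uu, huu, hRR⟩ := hR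
  obtain ⟨ll, hll2, hLL⟩ := hL
  -- jump bound at sstar
  have hjump : vv f T sstar - leftLim (vv f T) sstar =
      (if 0 < sstar then |f sstar - leftLim f sstar| else 0) := by
    split_ifs with h0
    · exact vv_leftLim hfin hT hll h0 hsstar.2
    · have : sstar = 0 := le_antisymm (not_lt.mp h0) hsstar.1
      rw [this, vv_leftLim_zero]
      ring
  -- eventually both in window
  have hevA : ∀ᶠ n in atTop, ll < a (φ n) :=
    hconv.eventually_const_lt hll2
  have hevB : ∀ᶠ n in atTop, b (φ n) < uu :=
    hbconv.eventually_lt_const huu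
  obtain ⟨n, hA, hB⟩ := (hevA.and hevB).exists
  set an := a (φ n) with han
  set bn := b (φ n) with hbn
  have hbdd := bigJ_bdd hfin hT hll (ha (φ n)) (hab (φ n)) (hbT (φ n))
  have hJnn := bigJ_nonneg (f := f) an bn hbdd
  have hcontra := hgt (φ n)
  rcases lt_or_ge bn sstar with hcase1 | hcase1
  · -- entirely left of sstar
    have h1 : vv f T bn ≤ leftLim (vv f T) sstar := hmono.le_leftLim hcase1
    have h2 : leftLim (vv f T) sstar - ε ≤ vv f T an :=
      hLL an hA.le (lt_of_le_of_lt (hab (φ n)) hcase1)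
    rw [← han, ← hbn] at hcontra
    have : vv f T bn - vv f T an ≤ ε := by linarith
    linarith
  rcases le_or_gt sstar an with hcase2 | hcase2
  · -- entirely right of sstar
    have h1 : vv f T bn ≤ vv f T sstar + ε := hRR bn (hcase2.trans (hab (φ n))) hB.le
    have h2 : vv f T sstar ≤ vv f T an := hmono hcase2
    rw [← han, ← hbn] at hcontra
    linarith
  · -- straddles sstar : an < sstar ≤ bn
    have hmem : sstar ∈ Ioc an bn := ⟨hcase2, hcase1⟩
    have h0s : 0 < sstar := lt_of_le_of_lt (ha (φ n)) hcase2
    rw [if_pos h0s] at hjump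
    have hjle : |f sstar - leftLim f sstar| ≤ bigJ f an bn := le_bigJ hmem hbdd
    have h1 : vv f T bn ≤ vv f T sstar + ε := hRR bn hcase1 hB.le
    have h2 : leftLim (vv f T) sstar - ε ≤ vv f T an := hLL an hA.le hcase2
    rw [← han, ← hbn] at hcontra
    linarith

/-- finite sums of jumps are dominated by the variation -/
lemma sum_aj_le (hll : ∀ t : ℝ, Tendsto f (𝓝[<] t) (𝓝 (leftLim f t))) {a : ℝ} (ha : 0 ≤ a)
    (F : Finset ℝ) : ∀ {b : ℝ}, a ≤ b → b ≤ T → (∀ x ∈ F, x ∈ Ioc a b) →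
      ∑ x ∈ F, |f x - leftLim f x| ≤ vv f T b - vv f T a := by
  classical
  have hmono := vv_mono hfin hT
  induction F using Finset.induction_on_max with
  | empty =>
    intro b hab hbT _
    simp only [Finset.sum_empty]
    have := hmono hab; linarith
  | insert x F hxmax IH =>
    intro b hab hbT hmem
    have hx : x ∈ Ioc a b := hmem x (Finset.mem_insert_self _ _)
    have hxnotin : x ∉ F := fun h => absurd (hxmax x h) (lt_irrefl x)
    rw [Finset.sum_insert hxnotin]
    have hajx : |f x - leftLim f x| = vv f T x - leftLim (vv f T) x :=
      (vv_leftLim hfin hT hll (lt_of_le_of_lt ha hx.1) (hx.2.trans hbT)).symm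
    have hvxb : vv f T x ≤ vv f T b := hmono hx.2
    by_cases hF : F.Nonempty
    · set c := F.max' hF with hc
      have hcF : c ∈ F := F.max'_mem hF
      have hcx : c < x := hxmax c hcF
      have hcIoc : c ∈ Ioc a b := hmem c (Finset.mem_insert_of_mem hcF)
      have hIH : ∑ y ∈ F, |f y - leftLim f y| ≤ vv f T c - vv f T a := by
        apply IH hcIoc.1.le (hcIoc.2.trans hbT)
        intro y hy
        exact ⟨(hmem y (Finset.mem_insert_of_mem hy)).1, F.le_max' y hy⟩
      have hcll : vv f T c ≤ leftLim (vv f T) x := hmono.le_leftLim hcx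
      linarith
    · rw [Finset.not_nonempty_iff_eq_empty.mp hF]
      simp only [Finset.sum_empty, add_zero]
      have hall : vv f T a ≤ leftLim (vv f T) x := hmono.le_leftLim hx.1
      linarith

lemma summable_aj (hll : ∀ t : ℝ, Tendsto f (𝓝[<] t) (𝓝 (leftLim f t))) :
    Summable ((Ioc 0 T).indicator (fun x => |f x - leftLim f x|)) := by
  classical
  apply summable_of_sum_le (c := vv f T T - vv f T 0)
  · intro x; exact indicator_nonneg (fun y _ => abs_nonneg _) x
  · intro u
    have heq : ∑ x ∈ u, (Ioc 0 T).indicator (fun x => |f x - leftLim f x|) x =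
        ∑ x ∈ u.filter (· ∈ Ioc 0 T), |f x - leftLim f x| := by
      rw [Finset.sum_filter]
      exact Finset.sum_congr rfl fun x _ => by
        by_cases hx : x ∈ Ioc 0 T <;> simp [indicator, hx]
    rw [heq]
    exact sum_aj_le hfin hT hll le_rfl _ hT le_rfl (fun x hx => (Finset.mem_filter.mp hx).2)

lemma summable_ind (hll : ∀ t : ℝ, Tendsto f (𝓝[<] t) (𝓝 (leftLim f t)))
    {s : Set ℝ} (hs : s ⊆ Ioc 0 T) :
    Summable (s.indicator (fun x => |f x - leftLim f x|)) := by
  refine Summable.of_nonneg_of_le (fun x => indicator_nonneg (fun y _ => abs_nonneg _) x)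
    (fun x => ?_) (summable_aj hfin hT hll)
  exact indicator_le_indicator_of_subset hs (fun y => abs_nonneg _) x

lemma summable_sq (hll : ∀ t : ℝ, Tendsto f (𝓝[<] t) (𝓝 (leftLim f t)))
    {s : Set ℝ} (hs : s ⊆ Ioc 0 T) :
    Summable (s.indicator (fun x => (f x - leftLim f x) * (f x - leftLim f x))) := by
  set C := vv f T T - vv f T 0 with hC
  refine Summable.of_nonneg_of_le (fun x => indicator_nonneg (fun y _ => mul_self_nonneg _) x)
    (fun x => ?_) ((summable_ind hfin hT hll hs).mul_left C)
  by_cases hx : x ∈ s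
  · rw [indicator_of_mem hx, indicator_of_mem hx]
    have h1 : |f x - leftLim f x| ≤ C := aj_le hfin hT hll le_rfl le_rfl (hs hx)
    calc (f x - leftLim f x) * (f x - leftLim f x)
        = |f x - leftLim f x| * |f x - leftLim f x| := (abs_mul_abs_self _).symm
      _ ≤ C * |f x - leftLim f x| := mul_le_mul_of_nonneg_right h1 (abs_nonneg _)
  · rw [indicator_of_notMem hx, indicator_of_notMem hx]
    simp

lemma tsum_aj_le (hll : ∀ t : ℝ, Tendsto f (𝓝[<] t) (𝓝 (leftLim f t)))
    {a b : ℝ} (ha : 0 ≤ a) (hab : a ≤ b) (hbT : b ≤ T) :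
    ∑' x : ℝ, (Ioc a b).indicator (fun x => |f x - leftLim f x|) x ≤ vv f T b - vv f T a := by
  classical
  have hsub : Ioc a b ⊆ Ioc 0 T := Ioc_subset_Ioc ha hbT
  refine Summable.tsum_le_of_sum_le (summable_ind hfin hT hll hsub) fun u => ?_
  have heq : ∑ x ∈ u, (Ioc a b).indicator (fun x => |f x - leftLim f x|) x =
      ∑ x ∈ u.filter (· ∈ Ioc a b), |f x - leftLim f x| := by
    rw [Finset.sum_filter]
    exact Finset.sum_congr rfl fun x _ => by
      by_cases hx : x ∈ Ioc a b <;> simp [indicator, hx]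
  rw [heq]
  exact sum_aj_le hfin hT hll ha _ hab hbT (fun x hx => (Finset.mem_filter.mp hx).2)

lemma abs_leftLim_sub (hll : ∀ t : ℝ, Tendsto f (𝓝[<] t) (𝓝 (leftLim f t)))
    {a s : ℝ} (ha : 0 ≤ a) (has : a < s) (hsT : s ≤ T) :
    |leftLim f s - f a| ≤ leftLim (vv f T) s - vv f T a := by
  have hmono := vv_mono hfin hT
  have hne : (𝓝[<] s).NeBot := inferInstance
  have hev : ∀ᶠ u in 𝓝[<] s, |f u - f a| ≤ vv f T u - vv f T a := by
    filter_upwards [Ioo_mem_nhdsLT_of_mem (show s ∈ Ioc a s from ⟨has, le_rfl⟩)] with u hu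
    exact abs_sub_le_vv hfin hu.1.le ha (hu.2.le.trans hsT)
  have h1 : Tendsto (fun u => |f u - f a|) (𝓝[<] s) (𝓝 (|leftLim f s - f a|)) :=
    ((hll s).sub tendsto_const_nhds).abs
  have h2 : Tendsto (fun u => vv f T u - vv f T a) (𝓝[<] s)
      (𝓝 (leftLim (vv f T) s - vv f T a)) :=
    (hmono.tendsto_leftLim s).sub tendsto_const_nhds
  exact le_of_tendsto_of_tendsto h1 h2 hev

omit hfin hT in
/-- tsum over a set, with the point s₀ split off -/
lemma tsum_split (g : ℝ → ℝ) {s : Set ℝ} {s₀ : ℝ} (hs₀ : s₀ ∈ s)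
    (hsum : Summable ((s \ {s₀}).indicator g)) :
    ∑' x : ℝ, s.indicator g x = g s₀ + ∑' x : ℝ, (s \ {s₀}).indicator g x := by
  classical
  have hpt : ∀ x, s.indicator g x =
      ({s₀} : Set ℝ).indicator g x + (s \ {s₀}).indicator g x := by
    intro x
    by_cases h1 : x = s₀
    · subst h1
      rw [indicator_of_mem hs₀, indicator_of_mem (mem_singleton _),
        indicator_of_notMem (by simp)]
      ring
    · by_cases h2 : x ∈ s
      · rw [indicator_of_mem h2, indicator_of_notMem (by simpa using h1),
          indicator_of_mem (show x ∈ s \ {s₀} from ⟨h2, by simpa using h1⟩)]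
        ring
      · rw [indicator_of_notMem h2, indicator_of_notMem (by simpa using h1),
          indicator_of_notMem (fun hx => h2 hx.1)]
        ring
  have hsing : Summable (({s₀} : Set ℝ).indicator g) := by
    apply summable_of_finite_support
    apply Set.Finite.subset (finite_singleton s₀)
    exact support_indicator_subset
  calc ∑' x : ℝ, s.indicator g x
      = ∑' x : ℝ, (({s₀} : Set ℝ).indicator g x + (s \ {s₀}).indicator g x) := tsum_congr hpt
    _ = (∑' x : ℝ, ({s₀} : Set ℝ).indicator g x) + ∑' x : ℝ, (s \ {s₀}).indicator g x :=
        Summable.tsum_add hsing hsum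
    _ = g s₀ + ∑' x : ℝ, (s \ {s₀}).indicator g x := by
        congr 1
        rw [tsum_eq_sum (s := {s₀}) (fun b hb => indicator_of_notMem (by simpa using hb) g)]
        simp

include hfin hT in
/-- per-interval estimate -/
lemma perInterval (hrc : ∀ t : ℝ, ContinuousWithinAt f (Ici t) t)
    (hll : ∀ t : ℝ, Tendsto f (𝓝[<] t) (𝓝 (leftLim f t)))
    {a b δ : ℝ} (ha : 0 ≤ a) (hab : a ≤ b) (hbT : b ≤ T) (hδ : 0 < δ)
    (hosc : vv f T b - vv f T a ≤ δ + bigJ f a b) :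
    |(f b - f a) * (f b - f a) -
      ∑' x : ℝ, (Ioc a b).indicator (fun x => (f x - leftLim f x) * (f x - leftLim f x)) x|
      ≤ 6 * (vv f T b - vv f T a) * δ := by
  classical
  have hmono := vv_mono hfin hT
  set m := vv f T b - vv f T a with hm
  have hm0 : 0 ≤ m := by have := hmono hab; simp [hm]; linarith
  have hsub : Ioc a b ⊆ Ioc 0 T := Ioc_subset_Ioc ha hbT
  have hbdd := bigJ_bdd hfin hT hll ha hab hbT
  have hD : |f b - f a| ≤ m := by rw [hm, vv_diff hfin ha hab hbT]; exact abs_sub_le_rv hfin hab ha hbT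
  set SJ := ∑' x : ℝ, (Ioc a b).indicator (fun x => (f x - leftLim f x) * (f x - leftLim f x)) x
    with hSJ
  by_cases hc : bigJ f a b ≤ 0
  · -- no jumps
    have hmδ : m ≤ δ := by linarith
    have hzero : (Ioc a b).indicator (fun x => (f x - leftLim f x) * (f x - leftLim f x)) =
        fun _ => (0:ℝ) := by
      funext x
      by_cases hx : x ∈ Ioc a b
      · rw [indicator_of_mem hx]
        have h1 : |f x - leftLim f x| ≤ 0 := (le_bigJ hx hbdd).trans hc
        have : f x - leftLim f x = 0 := abs_eq_zero.mp (le_antisymm h1 (abs_nonneg _))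
        rw [this]; ring
      · rw [indicator_of_notMem hx]
    have hSJ0 : SJ = 0 := by rw [hSJ, hzero]; exact tsum_zero
    rw [hSJ0, sub_zero, abs_mul, ← abs_mul, abs_mul]
    calc |f b - f a| * |f b - f a| ≤ m * δ :=
          mul_le_mul hD (hD.trans hmδ) (abs_nonneg _) hm0
      _ ≤ 6 * m * δ := by nlinarith
  · push_neg at hc
    -- pick a near-maximal jump point
    set c := bigJ f a b with hcdef
    have hne : (insert 0 ((fun x => |f x - leftLim f x|) '' Ioc a b)).Nonempty := ⟨0, by simp⟩
    obtain ⟨y, hy, hylt⟩ := exists_lt_of_lt_csSup hne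
      (show c - min δ c < c by
        have : 0 < min δ c := lt_min hδ hc
        linarith)
    have hy0 : y ≠ 0 → ∃ s₀ ∈ Ioc a b, |f s₀ - leftLim f s₀| = y := by
      intro hyne
      rcases hy with rfl | ⟨s₀, hs₀, rfl⟩
      · exact absurd rfl hyne
      · exact ⟨s₀, hs₀, rfl⟩
    have hyne : y ≠ 0 := by
      intro h
      rw [h] at hylt
      have h1 : min δ c ≤ c := min_le_right _ _
      linarith
    obtain ⟨s₀, hs₀, hjs₀⟩ := hy0 hyne
    have hjlow : c - δ ≤ |f s₀ - leftLim f s₀| := by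
      rw [hjs₀]
      have : min δ c ≤ δ := min_le_left _ _
      linarith
    set J₀ := f s₀ - leftLim f s₀ with hJ₀
    have hajm : |J₀| ≤ m := aj_le hfin hT hll ha hbT hs₀
    set β := m - |J₀| with hβ
    have hβ0 : 0 ≤ β := by linarith
    have hβ2δ : β ≤ 2 * δ := by
      have : m ≤ δ + c := hosc
      simp only [hβ]; linarith
    have hs₀0 : 0 < s₀ := lt_of_le_of_lt ha hs₀.1
    -- (i) |D - J₀| ≤ β
    have hDJ : |(f b - f a) - J₀| ≤ β := by
      have h1 : |f b - f s₀| ≤ vv f T b - vv f T s₀ :=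
        abs_sub_le_vv hfin hs₀.2 (le_of_lt hs₀0) hbT
      have h2 : |leftLim f s₀ - f a| ≤ leftLim (vv f T) s₀ - vv f T a :=
        abs_leftLim_sub hfin hT hll ha hs₀.1 (hs₀.2.trans hbT)
      have h3 : vv f T s₀ - leftLim (vv f T) s₀ = |J₀| :=
        vv_leftLim hfin hT hll hs₀0 (hs₀.2.trans hbT)
      calc |(f b - f a) - J₀| = |(f b - f s₀) + (leftLim f s₀ - f a)| := by
            rw [hJ₀]; ring_nf
        _ ≤ |f b - f s₀| + |leftLim f s₀ - f a| := abs_add_le _ _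
        _ ≤ (vv f T b - vv f T s₀) + (leftLim (vv f T) s₀ - vv f T a) := by linarith
        _ = m - (vv f T s₀ - leftLim (vv f T) s₀) := by rw [hm]; ring
        _ = β := by rw [h3, hβ]
    -- (iii)
    have hsq : |(f b - f a) * (f b - f a) - J₀ * J₀| ≤ β * (2 * m) := by
      have h1 : (f b - f a) * (f b - f a) - J₀ * J₀ = ((f b - f a) - J₀) * ((f b - f a) + J₀) := by
        ring
      rw [h1, abs_mul]
      apply mul_le_mul hDJ _ (abs_nonneg _) hβ0
      calc |(f b - f a) + J₀| ≤ |f b - f a| + |J₀| := abs_add_le _ _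
        _ ≤ 2 * m := by linarith
    -- (iv) SJ - J₀² bounds
    have hsummem : Summable ((Ioc a b \ {s₀}).indicator
        (fun x => (f x - leftLim f x) * (f x - leftLim f x))) :=
      summable_sq hfin hT hll ((diff_subset).trans hsub)
    have hsplit : SJ = J₀ * J₀ + ∑' x : ℝ, (Ioc a b \ {s₀}).indicator
        (fun x => (f x - leftLim f x) * (f x - leftLim f x)) x :=
      tsum_split _ hs₀ hsummem
    set R := ∑' x : ℝ, (Ioc a b \ {s₀}).indicator
        (fun x => (f x - leftLim f x) * (f x - leftLim f x)) x with hR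
    have hR0 : 0 ≤ R :=
      tsum_nonneg (fun x => indicator_nonneg (fun y _ => mul_self_nonneg _) x)
    have hRle : R ≤ m * β := by
      have hsum_aj_diff : Summable ((Ioc a b \ {s₀}).indicator (fun x => |f x - leftLim f x|)) :=
        summable_ind hfin hT hll ((diff_subset).trans hsub)
      have hstep : R ≤ m * ∑' x : ℝ, (Ioc a b \ {s₀}).indicator (fun x => |f x - leftLim f x|) x := by
        rw [← tsum_mul_left]
        apply Summable.tsum_le_tsum _ hsummem (hsum_aj_diff.mul_left m)
        intro x
        by_cases hx : x ∈ Ioc a b \ {s₀}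
        · rw [indicator_of_mem hx, indicator_of_mem hx]
          have h1 : |f x - leftLim f x| ≤ m := aj_le hfin hT hll ha hbT hx.1
          calc (f x - leftLim f x) * (f x - leftLim f x)
              = |f x - leftLim f x| * |f x - leftLim f x| := (abs_mul_abs_self _).symm
            _ ≤ m * |f x - leftLim f x| := mul_le_mul_of_nonneg_right h1 (abs_nonneg _)
        · rw [indicator_of_notMem hx, indicator_of_notMem hx]; simp
      have htail : ∑' x : ℝ, (Ioc a b \ {s₀}).indicator (fun x => |f x - leftLim f x|) x ≤ β := by
        have hfull := tsum_aj_le hfin hT hll ha hab hbT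
        have hsplit2 : ∑' x : ℝ, (Ioc a b).indicator (fun x => |f x - leftLim f x|) x =
            |J₀| + ∑' x : ℝ, (Ioc a b \ {s₀}).indicator (fun x => |f x - leftLim f x|) x := by
          have := tsum_split (fun x => |f x - leftLim f x|) hs₀ hsum_aj_diff
          rw [this, hJ₀]
        rw [hsplit2] at hfull
        simp only [hβ, hm]
        linarith
      calc R ≤ m * ∑' x : ℝ, (Ioc a b \ {s₀}).indicator (fun x => |f x - leftLim f x|) x := hstep
        _ ≤ m * β := mul_le_mul_of_nonneg_left htail hm0
    -- combine
    have : |(f b - f a) * (f b - f a) - SJ| ≤ β * (2*m) + R := by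
      rw [hsplit]
      calc |(f b - f a) * (f b - f a) - (J₀ * J₀ + R)|
          ≤ |(f b - f a) * (f b - f a) - J₀ * J₀| + |R| := by
            rw [show (f b - f a) * (f b - f a) - (J₀ * J₀ + R) =
              ((f b - f a) * (f b - f a) - J₀ * J₀) + (-R) by ring]
            exact (abs_add_le _ _).trans (by rw [abs_neg])
        _ ≤ β * (2*m) + R := by rw [abs_of_nonneg hR0]; linarith
    calc |(f b - f a) * (f b - f a) - SJ| ≤ β * (2*m) + R := this
      _ ≤ β * (2*m) + m * β := by linarith
      _ = 3 * m * β := by ring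
      _ ≤ 3 * m * (2*δ) := by nlinarith
      _ = 6 * m * δ := by ring

omit hfin hT in
lemma vv_zero : vv f T 0 = 0 := by
  have h : clamp T 0 = 0 := by
    rw [clamp, max_eq_left (min_le_left 0 T)]
  rw [vv, h, rv, Icc_self, eVariationOn.subsingleton f (subsingleton_singleton)]
  simp

lemma SJ_add (hll : ∀ t : ℝ, Tendsto f (𝓝[<] t) (𝓝 (leftLim f t)))
    {x y z : ℝ} (hx : 0 ≤ x) (hxy : x ≤ y) (hyz : y ≤ z) (hz : z ≤ T) :
    ∑' w : ℝ, (Ioc x z).indicator (fun w => (f w - leftLim f w) * (f w - leftLim f w)) w =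
    (∑' w : ℝ, (Ioc x y).indicator (fun w => (f w - leftLim f w) * (f w - leftLim f w)) w) +
    ∑' w : ℝ, (Ioc y z).indicator (fun w => (f w - leftLim f w) * (f w - leftLim f w)) w := by
  have hdisj : Disjoint (Ioc x y) (Ioc y z) := by
    apply Set.disjoint_left.mpr
    rintro w ⟨_, hw2⟩ ⟨hw3, _⟩
    exact absurd (hw2.trans_lt hw3) (lt_irrefl w)
  have hunion : Ioc x y ∪ Ioc y z = Ioc x z := Ioc_union_Ioc_eq_Ioc hxy hyz
  have hsum1 : Summable ((Ioc x y).indicator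
      (fun w => (f w - leftLim f w) * (f w - leftLim f w))) :=
    summable_sq hfin hT hll (Ioc_subset_Ioc hx (hyz.trans hz))
  have hsum2 : Summable ((Ioc y z).indicator
      (fun w => (f w - leftLim f w) * (f w - leftLim f w))) :=
    summable_sq hfin hT hll (Ioc_subset_Ioc (hx.trans hxy) hz)
  calc ∑' w : ℝ, (Ioc x z).indicator (fun w => (f w - leftLim f w) * (f w - leftLim f w)) w
      = ∑' w : ℝ, ((Ioc x y).indicator (fun w => (f w - leftLim f w) * (f w - leftLim f w)) w +
          (Ioc y z).indicator (fun w => (f w - leftLim f w) * (f w - leftLim f w)) w) := by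
        apply tsum_congr
        intro w
        rw [← hunion, indicator_union_of_disjoint hdisj]
    _ = _ := Summable.tsum_add hsum1 hsum2

omit hfin hT in
lemma min_sub_min_le {c d t : ℝ} (hcd : c ≤ d) : min d t - min c t ≤ d - c := by
  rcases le_total d t with h | h
  · rw [min_eq_left h, min_eq_left (hcd.trans h)]
  · rcases le_total c t with h2 | h2
    · rw [min_eq_right h, min_eq_left h2]; linarith
    · rw [min_eq_right h, min_eq_right h2]; linarith

/-- the deterministic pathwise theorem -/
lemma pathwise (hrc : ∀ t : ℝ, ContinuousWithinAt f (Ici t) t)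
    (hll : ∀ t : ℝ, Tendsto f (𝓝[<] t) (𝓝 (leftLim f t)))
    (p : ℕ → ℕ → ℝ) (hp0 : ∀ n, p n 0 = 0) (hpmono : ∀ n k, p n k ≤ p n (k+1))
    (hptop : ∀ n, Tendsto (fun k => p n k) atTop atTop)
    (hmesh : ∀ ε > (0:ℝ), ∃ N, ∀ n ≥ N, ∀ k, p n (k+1) - p n k ≤ ε)
    {ε : ℝ} (hε : 0 < ε) :
    ∃ N, ∀ n ≥ N, ∀ t ∈ Icc (0:ℝ) T,
      |(∑' k : ℕ, (f (min (p n (k+1)) t) - f (min (p n k) t)) *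
                   (f (min (p n (k+1)) t) - f (min (p n k) t))) -
        ∑' x : ℝ, (Ioc 0 t).indicator (fun x => (f x - leftLim f x) * (f x - leftLim f x)) x|
        < ε := by
  classical
  have hmono := vv_mono hfin hT
  set V := vv f T T with hV
  have hV0 : 0 ≤ V := by
    have := hmono hT
    rw [vv_zero] at this
    simpa [hV] using this
  set δ := ε / (6 * (V + 1)) with hδdef
  have hδ : 0 < δ := by positivity
  obtain ⟨η, hη, hosc⟩ := osc hfin hT hrc hll hδ
  obtain ⟨N, hN⟩ := hmesh η hη
  refine ⟨N, fun n hn t ht => ?_⟩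
  -- find K beyond which partition exceeds T
  obtain ⟨K, hK⟩ := (eventually_atTop.mp ((hptop n).eventually_ge_atTop T))
  set a : ℕ → ℝ := fun k => min (p n k) t with ha
  have hpm : ∀ j k, j ≤ k → p n j ≤ p n k := fun j k hjk => by
    induction k with
    | zero => rw [Nat.le_zero.mp hjk]
    | succ k ih =>
      rcases Nat.lt_or_ge j (k+1) with h | h
      · exact (ih (by omega)).trans (hpmono n k)
      · rw [Nat.le_antisymm hjk h]
  have ha0 : a 0 = 0 := by rw [ha]; simp [hp0 n, ht.1]
  have hamono : ∀ k, a k ≤ a (k+1) := fun k => min_le_min (hpmono n k) le_rfl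
  have haK : ∀ k, K ≤ k → a k = t := fun k hk => min_eq_right (ht.2.trans (hK k hk))
  have hat : ∀ k, a k ≤ t := fun k => min_le_right _ _
  have ha0' : ∀ k, 0 ≤ a k := fun k => by
    induction k with
    | zero => rw [ha0]
    | succ k ih => exact ih.trans (hamono k)
  have haT : ∀ k, a k ≤ T := fun k => (hat k).trans ht.2
  -- LHS is a finite sum
  have hterm0 : ∀ k, K ≤ k → (f (a (k+1)) - f (a k)) * (f (a (k+1)) - f (a k)) = 0 := by
    intro k hk
    rw [haK k hk, haK (k+1) (hk.trans (Nat.le_succ k))]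
    ring
  have hLHS : (∑' k : ℕ, (f (min (p n (k+1)) t) - f (min (p n k) t)) *
      (f (min (p n (k+1)) t) - f (min (p n k) t))) =
      ∑ k ∈ Finset.range K, (f (a (k+1)) - f (a k)) * (f (a (k+1)) - f (a k)) := by
    apply tsum_eq_sum
    intro k hk
    exact hterm0 k (le_of_not_gt (fun h => hk (Finset.mem_range.mpr h)))
  -- RHS telescopes
  have hRHS : ∀ j : ℕ,
      (∑' x : ℝ, (Ioc 0 (a j)).indicator (fun x => (f x - leftLim f x) * (f x - leftLim f x)) x) =
      ∑ k ∈ Finset.range j, ∑' x : ℝ,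
        (Ioc (a k) (a (k+1))).indicator (fun x => (f x - leftLim f x) * (f x - leftLim f x)) x := by
    intro j
    induction j with
    | zero =>
      rw [ha0]
      simp
    | succ j ih =>
      rw [Finset.sum_range_succ, ← ih]
      exact SJ_add hfin hT hll le_rfl (ha0' j) (hamono j) (haT (j+1))
  have hRHSK : (∑' x : ℝ, (Ioc 0 t).indicator
      (fun x => (f x - leftLim f x) * (f x - leftLim f x)) x) =
      ∑ k ∈ Finset.range K, ∑' x : ℝ,
        (Ioc (a k) (a (k+1))).indicator (fun x => (f x - leftLim f x) * (f x - leftLim f x)) x := by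
    rw [← haK K le_rfl]
    exact hRHS K
  rw [hLHS, hRHSK, ← Finset.sum_sub_distrib]
  -- per-interval bounds
  have hper : ∀ k ∈ Finset.range K,
      |(f (a (k+1)) - f (a k)) * (f (a (k+1)) - f (a k)) -
        ∑' x : ℝ, (Ioc (a k) (a (k+1))).indicator
          (fun x => (f x - leftLim f x) * (f x - leftLim f x)) x|
      ≤ 6 * (vv f T (a (k+1)) - vv f T (a k)) * δ := by
    intro k _
    apply perInterval hfin hT hrc hll (ha0' k) (hamono k) (haT (k+1)) hδ
    apply hosc _ _ (ha0' k) (hamono k) (haT (k+1))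
    calc a (k+1) - a k ≤ p n (k+1) - p n k := min_sub_min_le (hpmono n k)
      _ ≤ η := hN n hn k
  calc |∑ k ∈ Finset.range K, ((f (a (k+1)) - f (a k)) * (f (a (k+1)) - f (a k)) -
          ∑' x : ℝ, (Ioc (a k) (a (k+1))).indicator
            (fun x => (f x - leftLim f x) * (f x - leftLim f x)) x)|
      ≤ ∑ k ∈ Finset.range K, |(f (a (k+1)) - f (a k)) * (f (a (k+1)) - f (a k)) -
          ∑' x : ℝ, (Ioc (a k) (a (k+1))).indicator
            (fun x => (f x - leftLim f x) * (f x - leftLim f x)) x| :=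
        Finset.abs_sum_le_sum_abs _ _
    _ ≤ ∑ k ∈ Finset.range K, 6 * (vv f T (a (k+1)) - vv f T (a k)) * δ :=
        Finset.sum_le_sum hper
    _ = 6 * δ * ∑ k ∈ Finset.range K, (vv f T (a (k+1)) - vv f T (a k)) := by
        rw [Finset.mul_sum]
        exact Finset.sum_congr rfl fun k _ => by ring
    _ = 6 * δ * (vv f T (a K) - vv f T (a 0)) := by rw [Finset.sum_range_sub (fun k => vv f T (a k))]
    _ ≤ 6 * δ * V := by
        have h1 : vv f T (a K) ≤ V := hmono (haT K)
        have h2 : 0 ≤ vv f T (a 0) := by rw [ha0, vv_zero]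
        nlinarith
    _ < ε := by
        have hδV : δ * (6 * (V+1)) = ε := by
          rw [hδdef]; field_simp
        nlinarith

/-- SJ is monotone and right-continuous in the endpoint -/
lemma SJ_mono (hll : ∀ t : ℝ, Tendsto f (𝓝[<] t) (𝓝 (leftLim f t)))
    {t t' : ℝ} (ht : 0 ≤ t) (htt' : t ≤ t') (ht' : t' ≤ T) :
    (∑' x : ℝ, (Ioc 0 t).indicator (fun x => (f x - leftLim f x) * (f x - leftLim f x)) x) ≤
    ∑' x : ℝ, (Ioc 0 t').indicator (fun x => (f x - leftLim f x) * (f x - leftLim f x)) x := by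
  rw [SJ_add hfin hT hll le_rfl ht htt' ht']
  exact le_add_of_nonneg_right
    (tsum_nonneg fun x => indicator_nonneg (fun y _ => mul_self_nonneg _) x)

lemma SJ_rightCont (hrc : ∀ t : ℝ, ContinuousWithinAt f (Ici t) t)
    (hll : ∀ t : ℝ, Tendsto f (𝓝[<] t) (𝓝 (leftLim f t)))
    {t : ℝ} (ht : 0 ≤ t) (htT : t < T) :
    ContinuousWithinAt (fun t' => ∑' x : ℝ,
      (Ioc 0 t').indicator (fun x => (f x - leftLim f x) * (f x - leftLim f x)) x) (Ici t) t := by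
  have hmono := vv_mono hfin hT
  set V := vv f T T with hV
  have hV0 : 0 ≤ V := by
    have := hmono hT
    rw [vv_zero] at this
    simpa [hV] using this
  set SJ := fun t' => ∑' x : ℝ,
      (Ioc 0 t').indicator (fun x => (f x - leftLim f x) * (f x - leftLim f x)) x with hSJdef
  -- vv is right continuous at t
  have hvv : ContinuousWithinAt (vv f T) (Ici t) t := by
    rw [← continuousWithinAt_Ioi_iff_Ici]
    exact hmono.continuousWithinAt_Ioi_iff_rightLim_eq.mpr (vv_rightLim hfin hT hrc t)
  -- upper bound function
  have hub : ∀ t' ∈ Icc t T, SJ t' ≤ SJ t + V * (vv f T t' - vv f T t) := by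
    intro t' ht'
    rw [hSJdef]
    dsimp only
    rw [SJ_add hfin hT hll le_rfl ht ht'.1 ht'.2]
    have h1 : (∑' x : ℝ, (Ioc t t').indicator
        (fun x => (f x - leftLim f x) * (f x - leftLim f x)) x) ≤
        V * (vv f T t' - vv f T t) := by
      have hstep : (∑' x : ℝ, (Ioc t t').indicator
          (fun x => (f x - leftLim f x) * (f x - leftLim f x)) x) ≤
          V * ∑' x : ℝ, (Ioc t t').indicator (fun x => |f x - leftLim f x|) x := by
        rw [← tsum_mul_left]
        apply Summable.tsum_le_tsum _ (summable_sq hfin hT hll (Ioc_subset_Ioc ht ht'.2))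
          ((summable_ind hfin hT hll (Ioc_subset_Ioc ht ht'.2)).mul_left V)
        intro x
        by_cases hx : x ∈ Ioc t t'
        · rw [indicator_of_mem hx, indicator_of_mem hx]
          have h2 : |f x - leftLim f x| ≤ V := by
            have := aj_le hfin hT hll (le_rfl) (le_rfl) (Ioc_subset_Ioc ht ht'.2 hx)
            rw [vv_zero] at this
            simpa [hV] using this
          calc (f x - leftLim f x) * (f x - leftLim f x)
              = |f x - leftLim f x| * |f x - leftLim f x| := (abs_mul_abs_self _).symm
            _ ≤ V * |f x - leftLim f x| := mul_le_mul_of_nonneg_right h2 (abs_nonneg _)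
        · rw [indicator_of_notMem hx, indicator_of_notMem hx]; simp
      refine hstep.trans (mul_le_mul_of_nonneg_left ?_ hV0)
      exact tsum_aj_le hfin hT hll ht ht'.1 ht'.2
    linarith
  -- squeeze
  rw [ContinuousWithinAt]
  have hlow : ∀ᶠ t' in 𝓝[Ici t] t, SJ t ≤ SJ t' := by
    filter_upwards [self_mem_nhdsWithin,
      eventually_nhdsWithin_of_eventually_nhds (eventually_lt_nhds htT)] with t' h1 h2
    exact SJ_mono hfin hT hll ht h1 h2.le
  have hup : ∀ᶠ t' in 𝓝[Ici t] t, SJ t' ≤ SJ t + V * (vv f T t' - vv f T t) := by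
    filter_upwards [self_mem_nhdsWithin,
      eventually_nhdsWithin_of_eventually_nhds (eventually_lt_nhds htT)] with t' h1 h2
    exact hub t' ⟨h1, h2.le⟩
  have htend : Tendsto (fun t' => SJ t + V * (vv f T t' - vv f T t)) (𝓝[Ici t] t)
      (𝓝 (SJ t + V * (vv f T t - vv f T t))) :=
    tendsto_const_nhds.add ((tendsto_const_nhds.mul (hvv.sub tendsto_const_nhds)))
  rw [show SJ t + V * (vv f T t - vv f T t) = SJ t by ring] at htend
  exact tendsto_of_tendsto_of_tendsto_of_le_of_le' tendsto_const_nhds htend hlow hup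

omit hfin hT in
/-- right-continuity of the partition quadratic-variation sum in the endpoint -/
lemma QVsum_rightCont (hrc : ∀ t : ℝ, ContinuousWithinAt f (Ici t) t)
    (p : ℕ → ℝ) (hpmono : ∀ j k, j ≤ k → p j ≤ p k) (hptop : Tendsto p atTop atTop)
    {t : ℝ} (ht : 0 ≤ t) (htT : t < T) :
    ContinuousWithinAt (fun t' => ∑' k : ℕ,
      (f (min (p (k+1)) t') - f (min (p k) t')) * (f (min (p (k+1)) t') - f (min (p k) t')))
      (Ici t) t := by
  obtain ⟨K, hK⟩ := eventually_atTop.mp (hptop.eventually_ge_atTop T)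
  have hfin_eq : ∀ t' ≤ T, (∑' k : ℕ,
      (f (min (p (k+1)) t') - f (min (p k) t')) * (f (min (p (k+1)) t') - f (min (p k) t'))) =
      ∑ k ∈ Finset.range K,
      (f (min (p (k+1)) t') - f (min (p k) t')) * (f (min (p (k+1)) t') - f (min (p k) t')) := by
    intro t' ht'
    apply tsum_eq_sum
    intro k hk
    have hkK : K ≤ k := le_of_not_gt (fun h => hk (Finset.mem_range.mpr h))
    have h1 : min (p k) t' = t' := min_eq_right (ht'.trans (hK k hkK))
    have h2 : min (p (k+1)) t' = t' := min_eq_right (ht'.trans (hK (k+1) (hkK.trans (Nat.le_succ k))))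
    rw [h1, h2]; ring
  have hterm : ∀ c : ℝ, ContinuousWithinAt (fun t' => f (min c t')) (Ici t) t := by
    intro c
    rcases lt_or_ge t c with hc | hc
    · apply (hrc t).congr_of_eventuallyEq
      · filter_upwards [eventually_nhdsWithin_of_eventually_nhds (eventually_lt_nhds hc)]
          with t' h1
        rw [min_eq_right h1.le]
      · rw [min_eq_right hc.le]
    · apply (continuousWithinAt_const (b := f c)).congr_of_eventuallyEq
      · filter_upwards [self_mem_nhdsWithin] with t' h1
        rw [min_eq_left (hc.trans h1)]
      · rw [min_eq_left hc]
  have hsum : ContinuousWithinAt (fun t' => ∑ k ∈ Finset.range K,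
      (f (min (p (k+1)) t') - f (min (p k) t')) * (f (min (p (k+1)) t') - f (min (p k) t')))
      (Ici t) t := by
    apply tendsto_finset_sum
    intro k _
    exact ((hterm (p (k+1))).sub (hterm (p k))).mul ((hterm (p (k+1))).sub (hterm (p k)))
  apply hsum.congr_of_eventuallyEq
  · filter_upwards [eventually_nhdsWithin_of_eventually_nhds (eventually_lt_nhds htT)] with t' h1
    exact hfin_eq t' h1.le
  · exact hfin_eq t htT.le

end basic


end QVAux


/-- every càdlàg adapted process of locally finite variation has zero
continuous quadratic variation: its quadratic variation exists as the ucp limit of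
partition sums and equals the sum of squared jumps. -/
theorem stmt7 {Ω : Type*} {m0 : MeasurableSpace Ω} (μ : Measure Ω) [IsProbabilityMeasure μ]
    (ℱ : Filtration ℝ m0) (V : ℝ → Ω → ℝ)
    (hV : Cadlag V) (hVa : Adapted ℱ V) (hVv : LocFV V) :
    HasQV μ ℱ V (jumpCov V V) := by
  classical
  intro P hPart hMesh T hT ε hε
  have hrcV : ∀ ω (t : ℝ), ContinuousWithinAt (fun u => V u ω) (Ici t) t := fun ω => (hV ω).1
  have hllV : ∀ ω (t : ℝ), Tendsto (fun u => V u ω) (𝓝[<] t)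
      (𝓝 (Function.leftLim (fun u => V u ω) t)) := by
    intro ω t
    obtain ⟨l, hl⟩ := (hV ω).2 t
    have hne : (𝓝[<] t).NeBot := inferInstance
    rwa [leftLim_eq_of_tendsto (h := hne) hl]
  have hfinV : ∀ ω, eVariationOn (fun u => V u ω) (Icc 0 T) ≠ ⊤ := fun ω => (hVv ω T).ne
  have hT0 : (0:ℝ) ≤ T := hT.le
  have hp0 : ∀ n ω, P n 0 ω = 0 := fun n ω => (hPart n).1 ω
  have hpmono : ∀ n k ω, P n k ω ≤ P n (k+1) ω := fun n k ω => (hPart n).2.1 k ω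
  have hptop : ∀ n ω, Tendsto (fun k => P n k ω) atTop atTop := fun n ω => (hPart n).2.2.1 ω
  have hGval : ∀ (t : ℝ) ω, jumpCov V V t ω = ∑' x : ℝ, (Ioc 0 t).indicator
      (fun x => ((fun u => V u ω) x - Function.leftLim (fun u => V u ω) x) *
        ((fun u => V u ω) x - Function.leftLim (fun u => V u ω) x)) x := by
    intro t ω
    rw [jumpCov, tsum_subtype (Ioc 0 t)
      (fun x => jump (fun u => V u ω) x * jump (fun u => V u ω) x)]
    rfl
  -- pathwise uniform convergence
  have key : ∀ ω, ∀ ε' > (0:ℝ), ∃ N, ∀ n ≥ N, ∀ t ∈ Icc (0:ℝ) T,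
      |covApprox (P n) V V t ω - jumpCov V V t ω| < ε' := by
    intro ω ε' hε'
    obtain ⟨N, hN⟩ := QVAux.pathwise (f := fun u => V u ω) (T := T) (hfinV ω) hT0 (hrcV ω)
      (hllV ω) (fun n k => P n k ω) (fun n => hp0 n ω) (fun n k => hpmono n k ω)
      (fun n => hptop n ω)
      (fun e he => (hMesh e he).imp (fun N h n hn k => h n hn k ω)) hε'
    refine ⟨N, fun n hn t ht => ?_⟩
    rw [hGval]
    exact hN n hn t ht
  -- measurability
  have hVmeas : ∀ t, Measurable (V t) := fun t =>
    (hVa t).mono (ℱ.le t) le_rfl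
  have hPmeas : ∀ n k, Measurable (P n k) := by
    intro n k
    apply measurable_of_Iic
    intro x
    have hst := (hPart n).2.2.2 k x
    simp only [WithTop.coe_le_coe] at hst
    exact ℱ.le x _ hst
  have hFmeas : ∀ n (q : ℝ), Measurable (fun ω => covApprox (P n) V V q ω) := by
    intro n q
    have hterm : ∀ k, Measurable (fun ω => V (min (P n k ω) q) ω) := fun k =>
      QVAuxTop.meas_progress hVmeas (fun ω t => hrcV ω t) ((hPmeas n k).min measurable_const)
    have hpart : ∀ N : ℕ, Measurable (fun ω => ∑ k ∈ Finset.range N,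
        (V (min (P n (k+1) ω) q) ω - V (min (P n k ω) q) ω) *
        (V (min (P n (k+1) ω) q) ω - V (min (P n k ω) q) ω)) := fun N =>
      Finset.measurable_sum _ (fun k _ =>
        ((hterm (k+1)).sub (hterm k)).mul ((hterm (k+1)).sub (hterm k)))
    apply measurable_of_tendsto_metrizable hpart
    rw [tendsto_pi_nhds]
    intro ω
    obtain ⟨K, hK⟩ := eventually_atTop.mp ((hptop n ω).eventually_ge_atTop q)
    have hzero : ∀ k ∉ Finset.range K,
        (V (min (P n (k+1) ω) q) ω - V (min (P n k ω) q) ω) *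
        (V (min (P n (k+1) ω) q) ω - V (min (P n k ω) q) ω) = 0 := by
      intro k hk
      have hkK : K ≤ k := le_of_not_gt (fun h => hk (Finset.mem_range.mpr h))
      rw [min_eq_right (hK k hkK), min_eq_right (hK (k+1) (hkK.trans (Nat.le_succ k)))]
      ring
    have hsummable : Summable (fun k => (V (min (P n (k+1) ω) q) ω - V (min (P n k ω) q) ω) *
        (V (min (P n (k+1) ω) q) ω - V (min (P n k ω) q) ω)) :=
      summable_of_ne_finset_zero hzero
    exact hsummable.hasSum.tendsto_sum_nat
  have hGmeas : ∀ q ∈ Icc (0:ℝ) T, Measurable (fun ω => jumpCov V V q ω) := by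
    intro q hq
    apply measurable_of_tendsto_metrizable (f := fun n ω => covApprox (P n) V V q ω)
      (fun n => hFmeas n q)
    rw [tendsto_pi_nhds]
    intro ω
    rw [Metric.tendsto_atTop]
    intro ε' hε'
    obtain ⟨N, hN⟩ := key ω ε' hε'
    exact ⟨N, fun n hn => by rw [Real.dist_eq]; exact hN n hn q hq⟩
  -- right-continuity in time of the difference
  have hcont : ∀ n ω (t : ℝ), 0 ≤ t → t < T → ContinuousWithinAt
      (fun t' => covApprox (P n) V V t' ω - jumpCov V V t' ω) (Ici t) t := by
    intro n ω t ht htT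
    have h1 := QVAux.QVsum_rightCont (f := fun u => V u ω) (T := T) (hrcV ω)
      (fun k => P n k ω) (fun j k hjk => (monotone_nat_of_le_succ (fun k => hpmono n k ω)) hjk)
      (hptop n ω) ht htT
    have h2 := QVAux.SJ_rightCont (hfinV ω) hT0 (hrcV ω) (hllV ω) ht htT
    have := h1.sub h2
    apply this.congr_of_eventuallyEq
    · filter_upwards with t'
      rw [hGval]
      rfl
    · rw [hGval]
      rfl
  -- countable dense set of times
  set D : Set ℝ := insert T ((fun (r : ℚ) => (r : ℝ)) '' univ ∩ Icc 0 T) with hD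
  have hDcount : D.Countable :=
    (((countable_univ (α := ℚ)).image _).mono inter_subset_left).insert T
  have hDsub : D ⊆ Icc (0:ℝ) T := by
    rintro x (rfl | ⟨_, h2⟩)
    · exact ⟨hT0, le_rfl⟩
    · exact h2
  set S' : ℕ → Set Ω := fun n => ⋃ q ∈ D,
    {ω | ε/2 ≤ |covApprox (P n) V V q ω - jumpCov V V q ω|} with hS'
  have hS'meas : ∀ n, MeasurableSet (S' n) := fun n =>
    MeasurableSet.biUnion hDcount (fun q hq =>
      measurableSet_le measurable_const (((hFmeas n q).sub (hGmeas q (hDsub hq))).abs))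
  -- inclusion via rational reduction
  have hsub : ∀ n, {ω | ∃ t ∈ Icc (0:ℝ) T,
      ε ≤ |covApprox (P n) V V t ω - jumpCov V V t ω|} ⊆ S' n := by
    intro n ω hω
    obtain ⟨t, ht, hεt⟩ := hω
    rcases eq_or_lt_of_le ht.2 with heq | htT
    · subst heq
      refine mem_biUnion (mem_insert _ _) ?_
      rw [mem_setOf_eq]
      linarith
    · have hcwa := hcont n ω t ht.1 htT
      have habs : Tendsto (fun t' => |covApprox (P n) V V t' ω - jumpCov V V t' ω|)
          (𝓝[Ici t] t) (𝓝 (|covApprox (P n) V V t ω - jumpCov V V t ω|)) := hcwa.abs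
      have hev1 : ∀ᶠ t' in 𝓝[Ici t] t,
          ε/2 < |covApprox (P n) V V t' ω - jumpCov V V t' ω| :=
        habs.eventually_const_lt (lt_of_lt_of_le (by linarith) hεt)
      have hev2 : ∀ᶠ t' in 𝓝[Ici t] t, t' < T :=
        eventually_nhdsWithin_of_eventually_nhds (eventually_lt_nhds htT)
      have hev := hev1.and hev2
      rw [eventually_iff, mem_nhdsWithin] at hev
      obtain ⟨Uo, hUo, htUo, hsubU⟩ := hev
      obtain ⟨δ, hδ, hball⟩ := Metric.mem_nhds_iff.mp (hUo.mem_nhds htUo)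
      obtain ⟨q, hq1, hq2⟩ := exists_rat_btwn (show t < min (t+δ) T from lt_min (by linarith) htT)
      have hqlt := lt_min_iff.mp hq2
      have hqU : (q:ℝ) ∈ Uo ∩ Ici t := by
        refine ⟨hball ?_, le_of_lt hq1⟩
        rw [Metric.mem_ball, Real.dist_eq, abs_of_pos (by linarith)]
        linarith [hqlt.1]
      have hqM := hsubU hqU
      rw [mem_setOf_eq] at hqM
      have hqD : (q:ℝ) ∈ D := mem_insert_of_mem _
        ⟨⟨q, trivial, rfl⟩, ⟨by linarith [ht.1], hqlt.2.le⟩⟩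
      exact mem_biUnion hqD (le_of_lt hqM.1)
  -- not in S' n eventually
  have hmiss : ∀ ω, ∃ N, ∀ n ≥ N, ω ∉ S' n := by
    intro ω
    obtain ⟨N, hN⟩ := key ω (ε/2) (by linarith)
    refine ⟨N, fun n hn hmem => ?_⟩
    rw [hS'] at hmem
    simp only [mem_iUnion, mem_setOf_eq] at hmem
    obtain ⟨q, hq, hle⟩ := hmem
    exact absurd (hN n hn q (hDsub hq)) (not_lt.mpr hle)
  set U : ℕ → Set Ω := fun n => ⋃ m, ⋃ (_ : n ≤ m), S' m with hU
  have hUmeas : ∀ n, MeasurableSet (U n) := fun n =>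
    MeasurableSet.iUnion (fun m => MeasurableSet.iUnion (fun _ => hS'meas m))
  have hUanti : Antitone U := by
    intro i j hij
    rw [hU]
    refine iUnion₂_subset fun m hm => ?_
    exact subset_iUnion₂ (s := fun m _ => S' m) m (hij.trans hm)
  have hUempty : (⋂ n, U n) = ∅ := by
    rw [eq_empty_iff_forall_notMem]
    intro ω hω
    rw [mem_iInter] at hω
    obtain ⟨N, hN⟩ := hmiss ω
    have := hω N
    rw [hU] at this
    simp only [mem_iUnion] at this
    obtain ⟨m, hm, hmem⟩ := this
    exact hN m hm hmem
  have htendU : Tendsto (fun n => μ (U n)) atTop (𝓝 0) := by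
    have := tendsto_measure_iInter_atTop (μ := μ)
      (fun n => (hUmeas n).nullMeasurableSet) hUanti ⟨0, measure_ne_top μ _⟩
    rw [hUempty] at this
    simpa [Function.comp_def] using this
  refine tendsto_of_tendsto_of_tendsto_of_le_of_le tendsto_const_nhds htendU
    (fun n => zero_le) (fun n => measure_mono ?_)
  refine (hsub n).trans ?_
  intro ω h
  exact mem_iUnion.mpr ⟨n, mem_iUnion.mpr ⟨le_rfl, h⟩⟩
end
end

section
/- Pointwise integration by parts identity for jumps: let f : ℝ_+ × ℝ → ℝ be Lipschitz in x and càdlàg in t, with left and right x-derivatives existing everywhere, let f^-(t,x) = f(t−,x), Δ_t f = f − f^-, Y_t = f(t, X_t), ΔY_t = Y_t − f^-(t, X_{t−}). Then for each t, ∫_{X_{t−}}^{X_t} (f(t,x) − Y_t) f^-_{,2}(t,x) dx + (1/2)(ΔY_t)² = ∫_ℝ (f_{,2}(t,x) 1_{x < X_t} − f^-_{,2}(t,x) 1_{x < X_{t−}}) Δ_t f(t,x) dx, whenever f has compact support in x. -/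
open MeasureTheory Filter Set Function Topology

noncomputable section

open GBE MeasureTheory Set Filter Function

open intervalIntegral

section IBPAux

lemma aesm_of_ae_deriv {g g' : ℝ → ℝ} (h : ∀ᵐ x : ℝ, HasDerivAt g (g' x) x) :
    AEStronglyMeasurable g' (volume : Measure ℝ) := by
  have he : deriv g =ᵐ[volume] g' := h.mono fun x hx => hx.deriv
  exact (measurable_deriv g).aestronglyMeasurable.congr he

lemma ae_abs_le_of_lip {L : NNReal} {g g' : ℝ → ℝ} (hg : LipschitzWith L g)
    (h : ∀ᵐ x : ℝ, HasDerivAt g (g' x) x) : ∀ᵐ x : ℝ, |g' x| ≤ (L : ℝ) :=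
  h.mono fun x hx => by simpa [Real.norm_eq_abs] using hx.le_of_lipschitz hg

lemma intervalIntegrable_of_ae_bound {φ : ℝ → ℝ} {C : ℝ}
    (hm : AEStronglyMeasurable φ (volume : Measure ℝ))
    (hb : ∀ᵐ x : ℝ, |φ x| ≤ C) (c d : ℝ) : IntervalIntegrable φ volume c d := by
  rw [intervalIntegrable_iff]
  have hfin : volume (Set.uIoc c d) < ⊤ := measure_Ioc_lt_top
  refine Integrable.mono' ((integrableOn_const_iff (C := C)).2 (Or.inr hfin)) hm.restrict ?_
  exact ae_restrict_of_ae (hb.mono fun x hx => by simpa [Real.norm_eq_abs] using hx)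

lemma ftc_lip {L : NNReal} {g g' : ℝ → ℝ} (hg : LipschitzWith L g)
    (hd : ∀ᵐ x : ℝ, HasDerivAt g (g' x) x) (c d : ℝ) :
    ∫ x in c..d, g' x = g d - g c := by
  have hgc : Continuous g := hg.continuous
  have hgi : ∀ p q : ℝ, IntervalIntegrable g volume p q := fun p q =>
    hgc.intervalIntegrable p q
  set δ : ℕ → ℝ := fun n => 1 / (n + 1) with hδdef
  have hδpos : ∀ n, 0 < δ n := fun n => by positivity
  have hδ0 : Tendsto δ atTop (𝓝 0) := tendsto_one_div_add_atTop_nhds_zero_nat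
  have hseq : ∀ x : ℝ, Tendsto (fun n => x + δ n) atTop (𝓝[≠] x) := by
    intro x
    apply tendsto_nhdsWithin_of_tendsto_nhds_of_eventually_within
    · simpa using tendsto_const_nhds.add hδ0
    · refine Eventually.of_forall fun n => ?_
      simp only [Set.mem_compl_iff, Set.mem_singleton_iff]
      have := hδpos n
      intro hx
      have : δ n = 0 := by linarith [congrArg (fun y => y - x) hx, add_sub_cancel_left x (δ n)]
      linarith [hδpos n]
  have hFlim : ∀ᵐ x : ℝ, Tendsto (fun n => (g (x + δ n) - g x) / δ n) atTop (𝓝 (g' x)) := by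
    filter_upwards [hd] with x hx
    have h1 : Tendsto (fun n => slope g x (x + δ n)) atTop (𝓝 (g' x)) :=
      (hasDerivAt_iff_tendsto_slope.1 hx).comp (hseq x)
    exact Tendsto.congr (fun n => by rw [slope_def_field, add_sub_cancel_left]) h1
  have hDCT : Tendsto (fun n => ∫ x in c..d, (g (x + δ n) - g x) / δ n) atTop
      (𝓝 (∫ x in c..d, g' x)) := by
    apply intervalIntegral.tendsto_integral_filter_of_dominated_convergence (fun _ => (L : ℝ))
    · exact Eventually.of_forall fun n =>
        (((hgc.comp (continuous_id.add continuous_const)).sub hgc).div_const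
          _).aestronglyMeasurable.restrict
    · refine Eventually.of_forall fun n => Eventually.of_forall fun x _ => ?_
      rw [Real.norm_eq_abs, abs_div, abs_of_pos (hδpos n), div_le_iff₀ (hδpos n)]
      have h := hg.dist_le_mul (x + δ n) x
      rw [Real.dist_eq, Real.dist_eq, add_sub_cancel_left,
        abs_of_pos (hδpos n)] at h
      exact h
    · exact intervalIntegrable_const
    · exact hFlim.mono fun x hx _ => hx
  have hval : ∀ n, ∫ x in c..d, (g (x + δ n) - g x) / δ n
      = ((∫ x in d..(d + δ n), g x) - ∫ x in c..(c + δ n), g x) / δ n := by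
    intro n
    have hti : IntervalIntegrable (fun x => g (x + δ n)) volume c d :=
      (hgc.comp (continuous_id.add continuous_const)).intervalIntegrable c d
    rw [intervalIntegral.integral_div]
    congr 1
    rw [intervalIntegral.integral_sub hti (hgi c d),
      intervalIntegral.integral_comp_add_right g (δ n)]
    have A : (∫ x in c..(c + δ n), g x) + ∫ x in (c + δ n)..(d + δ n), g x
        = ∫ x in c..(d + δ n), g x := integral_add_adjacent_intervals (hgi _ _) (hgi _ _)
    have B : (∫ x in c..d, g x) + ∫ x in d..(d + δ n), g x = ∫ x in c..(d + δ n), g x :=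
      integral_add_adjacent_intervals (hgi _ _) (hgi _ _)
    linarith
  have hlim : ∀ p : ℝ, Tendsto (fun n => (∫ x in p..(p + δ n), g x) / δ n) atTop (𝓝 (g p)) := by
    intro p
    have hD : HasDerivAt (fun u => ∫ x in p..u, g x) (g p) p :=
      intervalIntegral.integral_hasDerivAt_right (hgi p p)
        (hgc.stronglyMeasurable.stronglyMeasurableAtFilter) hgc.continuousAt
    have h1 : Tendsto (fun n => slope (fun u => ∫ x in p..u, g x) p (p + δ n)) atTop
        (𝓝 (g p)) := (hasDerivAt_iff_tendsto_slope.1 hD).comp (hseq p)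
    refine Tendsto.congr (fun n => ?_) h1
    rw [slope_def_field, add_sub_cancel_left, intervalIntegral.integral_same, sub_zero]
  have hfin : Tendsto (fun n => ∫ x in c..d, (g (x + δ n) - g x) / δ n) atTop
      (𝓝 (g d - g c)) := by
    have : Tendsto (fun n => ((∫ x in d..(d + δ n), g x) - ∫ x in c..(c + δ n), g x) / δ n)
        atTop (𝓝 (g d - g c)) := by
      simpa [sub_div] using (hlim d).sub (hlim c)
    exact this.congr fun n => (hval n).symm
  exact tendsto_nhds_unique hDCT hfin

lemma lip_mul {L : NNReal} {u v : ℝ → ℝ} (hu : LipschitzWith L u) (hv : LipschitzWith L v)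
    {C : ℝ} (hCu : ∀ x, |u x| ≤ C) (hCv : ∀ x, |v x| ≤ C) :
    ∃ L' : NNReal, LipschitzWith L' (fun x => u x * v x) := by
  have hC0 : 0 ≤ C := le_trans (abs_nonneg _) (hCu 0)
  refine ⟨2 * L * C.toNNReal, LipschitzWith.of_dist_le_mul fun x y => ?_⟩
  have hcoe : ((2 * L * C.toNNReal : NNReal) : ℝ) = 2 * (L : ℝ) * C := by
    push_cast [Real.coe_toNNReal C hC0]; ring
  rw [Real.dist_eq, Real.dist_eq, hcoe]
  have h1 : |u x - u y| ≤ (L : ℝ) * |x - y| := by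
    have := hu.dist_le_mul x y; simpa [Real.dist_eq] using this
  have h2 : |v x - v y| ≤ (L : ℝ) * |x - y| := by
    have := hv.dist_le_mul x y; simpa [Real.dist_eq] using this
  have e : u x * v x - u y * v y = u x * (v x - v y) + v y * (u x - u y) := by ring
  calc |u x * v x - u y * v y| ≤ |u x * (v x - v y)| + |v y * (u x - u y)| := by
        rw [e]; exact abs_add_le _ _
    _ = |u x| * |v x - v y| + |v y| * |u x - u y| := by rw [abs_mul, abs_mul]
    _ ≤ C * ((L : ℝ) * |x - y|) + C * ((L : ℝ) * |x - y|) :=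
        add_le_add (mul_le_mul (hCu x) h2 (abs_nonneg _) hC0)
          (mul_le_mul (hCv y) h1 (abs_nonneg _) hC0)
    _ = 2 * (L : ℝ) * C * |x - y| := by ring

lemma ibp_lip {L : NNReal} {u v u' v' : ℝ → ℝ} (hu : LipschitzWith L u)
    (hv : LipschitzWith L v)
    (hdu : ∀ᵐ x : ℝ, HasDerivAt u (u' x) x) (hdv : ∀ᵐ x : ℝ, HasDerivAt v (v' x) x)
    {C : ℝ} (hCu : ∀ x, |u x| ≤ C) (hCv : ∀ x, |v x| ≤ C) (c d : ℝ) :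
    ∫ x in c..d, (u' x * v x + u x * v' x) = u d * v d - u c * v c := by
  obtain ⟨L', hL'⟩ := lip_mul hu hv hCu hCv
  have hae : ∀ᵐ x : ℝ, HasDerivAt (fun y => u y * v y) (u' x * v x + u x * v' x) x := by
    filter_upwards [hdu, hdv] with x h1 h2 using h1.mul h2
  exact ftc_lip hL' hae c d

lemma ae_ne_pt (b : ℝ) : ∀ᵐ x : ℝ, x ≠ b := by
  rw [ae_iff]
  simp only [not_not, Set.setOf_eq_eq_singleton]
  exact measure_singleton b

end IBPAux

/-- pointwise integration by parts identity for jumps (identity (6.6)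
of the paper). With `a = X_{t-}`, `b = X_t`, `f⁻(t,x) = f(t-,x)`,
`f₂, f₂⁻` the a.e. `x`-derivatives of `f(t,·)` and `f⁻(t,·)`:
`∫_a^b (f(t,x) − f(t,b)) f₂⁻(t,x) dx + ½ (f(t,b) − f⁻(t,a))²
  = ∫_ℝ (f₂(t,x) 1_{x<b} − f₂⁻(t,x) 1_{x<a}) (f(t,x) − f⁻(t,x)) dx`. -/
theorem stmt16 (f f₂ f₂m : ℝ → ℝ → ℝ)
    (hLip : ∃ L, ∀ t, LipschitzWith L (fun x => f t x))
    (hcad : ∀ x, CadlagOn (fun t => f t x))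
    (hder : ∀ t x, ∃ dl dr : ℝ,
      HasDerivWithinAt (fun y => f t y) dl (Iio x) x ∧
      HasDerivWithinAt (fun y => f t y) dr (Ioi x) x)
    (hsupp : ∃ K : ℝ, ∀ t x : ℝ, K ≤ |x| → f t x = 0)
    (hf₂ : ∀ t, ∀ᵐ x : ℝ, HasDerivAt (fun y => f t y) (f₂ t x) x)
    (hf₂m : ∀ t, ∀ᵐ x : ℝ,
      HasDerivAt (fun y => Function.leftLim (fun s => f s y) t) (f₂m t x) x)
    (t a b : ℝ) (ht : 0 < t) :
    (∫ x in a..b, (f t x - f t b) * f₂m t x)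
        + (1/2) * (f t b - Function.leftLim (fun s => f s a) t)^2
      = ∫ x : ℝ, ((if x < b then f₂ t x else 0) - (if x < a then f₂m t x else 0))
          * (f t x - Function.leftLim (fun s => f s x) t) := by
  obtain ⟨L, hL⟩ := hLip
  obtain ⟨K0, hK0⟩ := hsupp
  have hne : (𝓝[<] t : Filter ℝ) ≠ ⊥ := (nhdsLT_neBot t).ne
  have htend : ∀ x : ℝ, Tendsto (fun s => f s x) (𝓝[<] t)
      (𝓝 (Function.leftLim (fun s => f s x) t)) := by
    intro x
    obtain ⟨l, hl⟩ := (hcad x).2 t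
    rwa [leftLim_eq_of_tendsto hl]
  have hLh : LipschitzWith L (fun x => Function.leftLim (fun s => f s x) t) := by
    refine LipschitzWith.of_dist_le_mul fun x y => ?_
    exact le_of_tendsto ((htend x).dist (htend y))
      (Eventually.of_forall fun s => (hL s).dist_le_mul x y)
  set K : ℝ := max K0 0 with hKdef
  have hK0' : (0:ℝ) ≤ K := le_max_right _ _
  have hgK : ∀ s x : ℝ, K ≤ |x| → f s x = 0 := fun s x hx =>
    hK0 s x (le_trans (le_max_left _ _) hx)
  have hhK : ∀ x : ℝ, K ≤ |x| → Function.leftLim (fun s => f s x) t = 0 := by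
    intro x hx
    have hz : (fun s => f s x) = fun _ => (0:ℝ) := funext fun s => hgK s x hx
    rw [hz]
    exact leftLim_eq_of_tendsto tendsto_const_nhds
  set Cb : ℝ := (L : ℝ) * (2 * K) with hCbdef
  have hCb0 : 0 ≤ Cb := by positivity
  have hbound : ∀ u : ℝ → ℝ, LipschitzWith L u → (∀ x, K ≤ |x| → u x = 0) →
      ∀ x, |u x| ≤ Cb := by
    intro u hu hz x
    by_cases hx : K ≤ |x|
    · rw [hz x hx, abs_zero]; exact hCb0
    · push_neg at hx
      have h1 : u K = 0 := hz K (by rw [abs_of_nonneg hK0'])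
      have h2 := hu.dist_le_mul x K
      rw [Real.dist_eq, Real.dist_eq, h1, sub_zero] at h2
      have h3 : |x - K| ≤ 2 * K := by
        have h5 : |x - K| ≤ |x| + |K| := by
          calc |x - K| = |x + -K| := by rw [sub_eq_add_neg]
            _ ≤ |x| + |-K| := abs_add_le _ _
            _ = |x| + |K| := by rw [abs_neg]
        rw [abs_of_nonneg hK0'] at h5
        linarith
      calc |u x| ≤ (L:ℝ) * |x - K| := h2
        _ ≤ (L:ℝ) * (2 * K) := mul_le_mul_of_nonneg_left h3 L.coe_nonneg
  have hCg : ∀ x, |f t x| ≤ Cb := hbound _ (hL t) (hgK t)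
  have hCh : ∀ x, |Function.leftLim (fun s => f s x) t| ≤ Cb := hbound _ hLh hhK
  have hmg₂ : AEStronglyMeasurable (f₂ t) volume := aesm_of_ae_deriv (hf₂ t)
  have hmh₂ : AEStronglyMeasurable (f₂m t) volume := aesm_of_ae_deriv (hf₂m t)
  have hbg₂ : ∀ᵐ x : ℝ, |f₂ t x| ≤ (L:ℝ) := ae_abs_le_of_lip (hL t) (hf₂ t)
  have hbh₂ : ∀ᵐ x : ℝ, |f₂m t x| ≤ (L:ℝ) := ae_abs_le_of_lip hLh (hf₂m t)
  have hcg : Continuous (fun x => f t x) := (hL t).continuous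
  have hch : Continuous (fun x => Function.leftLim (fun s => f s x) t) := hLh.continuous
  have hint : ∀ (φ ψ : ℝ → ℝ) (Cψ : ℝ), AEStronglyMeasurable φ volume →
      (∀ᵐ x : ℝ, |φ x| ≤ (L:ℝ)) → Continuous ψ → (∀ x, |ψ x| ≤ Cψ) →
      ∀ c d : ℝ, IntervalIntegrable (fun x => φ x * ψ x) volume c d := by
    intro φ ψ Cψ hφm hφb hψc hψb c d
    refine intervalIntegrable_of_ae_bound (C := (L:ℝ) * Cψ)
      (hφm.mul hψc.aestronglyMeasurable) ?_ c d
    filter_upwards [hφb] with x hx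
    simp only [Pi.mul_apply]
    rw [abs_mul]
    exact mul_le_mul hx (hψb x) (abs_nonneg _) L.coe_nonneg
  have hint' : ∀ (φ ψ : ℝ → ℝ) (Cψ : ℝ), AEStronglyMeasurable φ volume →
      (∀ᵐ x : ℝ, |φ x| ≤ (L:ℝ)) → Continuous ψ → (∀ x, |ψ x| ≤ Cψ) →
      ∀ c d : ℝ, IntervalIntegrable (fun x => ψ x * φ x) volume c d := by
    intro φ ψ Cψ hφm hφb hψc hψb c d
    have h := hint φ ψ Cψ hφm hφb hψc hψb c d
    rwa [show (fun x => φ x * ψ x) = fun x => ψ x * φ x from funext fun x => mul_comm _ _]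
      at h
  set M : ℝ := K + |a| + |b| + 1 with hMdef
  have hKM : K ≤ M := by
    have := abs_nonneg a; have := abs_nonneg b; rw [hMdef]; linarith
  have hM0 : (0:ℝ) ≤ M := le_trans hK0' hKM
  have hMa : -M ≤ a := by
    have := neg_abs_le a; have := abs_nonneg b; rw [hMdef] at *; linarith
  have haM : a ≤ M := by
    have := le_abs_self a; have := abs_nonneg b; rw [hMdef] at *; linarith
  have hMb : -M ≤ b := by
    have := neg_abs_le b; have := abs_nonneg a; rw [hMdef] at *; linarith
  have hbM : b ≤ M := by
    have := le_abs_self b; have := abs_nonneg a; rw [hMdef] at *; linarith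
  have hMM' : -M ≤ M := by linarith
  have hKnegM : K ≤ |(-M)| := by rw [abs_neg, abs_of_nonneg hM0]; exact hKM
  have hgM : f t (-M) = 0 := hgK t (-M) hKnegM
  have hhM : Function.leftLim (fun s => f s (-M)) t = 0 := hhK (-M) hKnegM
  -- FTC / IBP facts
  have fact1 : ∫ x in (-M)..b, (f₂ t x * f t x + f t x * f₂ t x)
      = f t b * f t b - f t (-M) * f t (-M) :=
    ibp_lip (hL t) (hL t) (hf₂ t) (hf₂ t) hCg hCg (-M) b
  have hA1 : ∫ x in (-M)..b, f₂ t x * f t x = f t b * f t b / 2 := by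
    have e : (∫ x in (-M)..b, (f₂ t x * f t x + f t x * f₂ t x))
        = ∫ x in (-M)..b, 2 * (f₂ t x * f t x) :=
      intervalIntegral.integral_congr fun x _ => by ring
    rw [e, intervalIntegral.integral_const_mul, hgM] at fact1
    linarith
  have fact2 : ∫ x in (-M)..b, (f₂ t x * Function.leftLim (fun s => f s x) t
        + f t x * f₂m t x)
      = f t b * Function.leftLim (fun s => f s b) t
        - f t (-M) * Function.leftLim (fun s => f s (-M)) t :=
    ibp_lip (hL t) hLh (hf₂ t) (hf₂m t) hCg hCh (-M) b
  have iA2 := hint (f₂ t) (fun x => Function.leftLim (fun s => f s x) t) Cb hmg₂ hbg₂ hch hCh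
  have iB := hint' (f₂m t) (fun x => f t x) Cb hmh₂ hbh₂ hcg hCg
  have hA2B : (∫ x in (-M)..b, f₂ t x * Function.leftLim (fun s => f s x) t)
      + (∫ x in (-M)..b, f t x * f₂m t x)
      = f t b * Function.leftLim (fun s => f s b) t := by
    rw [← intervalIntegral.integral_add (iA2 (-M) b) (iB (-M) b), fact2, hgM, zero_mul,
      sub_zero]
  have fact3 : ∫ x in (-M)..a, (f₂m t x * Function.leftLim (fun s => f s x) t
        + Function.leftLim (fun s => f s x) t * f₂m t x)
      = Function.leftLim (fun s => f s a) t * Function.leftLim (fun s => f s a) t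
        - Function.leftLim (fun s => f s (-M)) t * Function.leftLim (fun s => f s (-M)) t :=
    ibp_lip hLh hLh (hf₂m t) (hf₂m t) hCh hCh (-M) a
  have hA4 : ∫ x in (-M)..a, f₂m t x * Function.leftLim (fun s => f s x) t
      = Function.leftLim (fun s => f s a) t * Function.leftLim (fun s => f s a) t / 2 := by
    have e : (∫ x in (-M)..a, (f₂m t x * Function.leftLim (fun s => f s x) t
          + Function.leftLim (fun s => f s x) t * f₂m t x))
        = ∫ x in (-M)..a, 2 * (f₂m t x * Function.leftLim (fun s => f s x) t) :=
      intervalIntegral.integral_congr fun x _ => by ring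
    rw [e, intervalIntegral.integral_const_mul, hhM] at fact3
    linarith
  have ftc_ab : ∫ x in a..b, f₂m t x
      = Function.leftLim (fun s => f s b) t - Function.leftLim (fun s => f s a) t :=
    ftc_lip hLh (hf₂m t) a b
  have hBsplit : (∫ x in (-M)..a, f t x * f₂m t x) + (∫ x in a..b, f t x * f₂m t x)
      = ∫ x in (-M)..b, f t x * f₂m t x :=
    intervalIntegral.integral_add_adjacent_intervals (iB (-M) a) (iB a b)
  have hA3 : ∫ x in (-M)..a, f₂m t x * f t x = ∫ x in (-M)..a, f t x * f₂m t x :=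
    intervalIntegral.integral_congr fun x _ => mul_comm _ _
  -- LHS
  have iConst : ∀ c d : ℝ, IntervalIntegrable (fun x => f t b * f₂m t x) volume c d :=
    hint' (f₂m t) (fun _ => f t b) Cb hmh₂ hbh₂ continuous_const (fun _ => hCg b)
  have hLHSe : (∫ x in a..b, (f t x - f t b) * f₂m t x)
      = (∫ x in a..b, f t x * f₂m t x)
        - f t b * (Function.leftLim (fun s => f s b) t
          - Function.leftLim (fun s => f s a) t) := by
    have e : (∫ x in a..b, (f t x - f t b) * f₂m t x)
        = ∫ x in a..b, (f t x * f₂m t x - f t b * f₂m t x) :=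
      intervalIntegral.integral_congr fun x _ => by ring
    rw [e, intervalIntegral.integral_sub (iB a b) (iConst a b),
      intervalIntegral.integral_const_mul, ftc_ab]
  -- RHS indicator pieces
  have hmPb : AEStronglyMeasurable (fun x => if x < b then f₂ t x else 0) volume := by
    have e : (fun x : ℝ => if x < b then f₂ t x else 0) = (Iio b).indicator (f₂ t) := by
      funext x; simp [Set.indicator_apply]
    rw [e]; exact hmg₂.indicator measurableSet_Iio
  have hbPb : ∀ᵐ x : ℝ, |if x < b then f₂ t x else 0| ≤ (L:ℝ) := by
    filter_upwards [hbg₂] with x hx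
    split_ifs
    · exact hx
    · simpa using L.coe_nonneg
  have hmQa : AEStronglyMeasurable (fun x => if x < a then f₂m t x else 0) volume := by
    have e : (fun x : ℝ => if x < a then f₂m t x else 0) = (Iio a).indicator (f₂m t) := by
      funext x; simp [Set.indicator_apply]
    rw [e]; exact hmh₂.indicator measurableSet_Iio
  have hbQa : ∀ᵐ x : ℝ, |if x < a then f₂m t x else 0| ≤ (L:ℝ) := by
    filter_upwards [hbh₂] with x hx
    split_ifs
    · exact hx
    · simpa using L.coe_nonneg
  have hψc : Continuous (fun x => f t x - Function.leftLim (fun s => f s x) t) :=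
    hcg.sub hch
  have hψb : ∀ x, |f t x - Function.leftLim (fun s => f s x) t| ≤ Cb + Cb := by
    intro x
    calc |f t x - Function.leftLim (fun s => f s x) t|
        = |f t x + -Function.leftLim (fun s => f s x) t| := by rw [sub_eq_add_neg]
      _ ≤ |f t x| + |-Function.leftLim (fun s => f s x) t| := abs_add_le _ _
      _ = |f t x| + |Function.leftLim (fun s => f s x) t| := by rw [abs_neg]
      _ ≤ Cb + Cb := add_le_add (hCg x) (hCh x)
  have iP := hint (fun x => if x < b then f₂ t x else 0)
    (fun x => f t x - Function.leftLim (fun s => f s x) t) (Cb + Cb) hmPb hbPb hψc hψb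
  have iQ := hint (fun x => if x < a then f₂m t x else 0)
    (fun x => f t x - Function.leftLim (fun s => f s x) t) (Cb + Cb) hmQa hbQa hψc hψb
  have iF2ψ := hint (f₂ t)
    (fun x => f t x - Function.leftLim (fun s => f s x) t) (Cb + Cb) hmg₂ hbg₂ hψc hψb
  have iF2mψ := hint (f₂m t)
    (fun x => f t x - Function.leftLim (fun s => f s x) t) (Cb + Cb) hmh₂ hbh₂ hψc hψb
  have iA1 := hint (f₂ t) (fun x => f t x) Cb hmg₂ hbg₂ hcg hCg
  have iA3 := hint (f₂m t) (fun x => f t x) Cb hmh₂ hbh₂ hcg hCg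
  have iA4 := hint (f₂m t) (fun x => Function.leftLim (fun s => f s x) t) Cb hmh₂ hbh₂ hch hCh
  -- restrict the full-line integral
  have hz : ∀ x : ℝ, x ∉ Ioc (-M) M →
      (((if x < b then f₂ t x else 0) - (if x < a then f₂m t x else 0))
        * (f t x - Function.leftLim (fun s => f s x) t)) = 0 := by
    intro x hx
    simp only [Set.mem_Ioc, not_and_or, not_lt, not_le] at hx
    have hKx : K ≤ |x| := by
      rcases hx with hx | hx
      · exact le_abs.2 (Or.inr (by linarith))
      · exact le_abs.2 (Or.inl (by linarith))
    rw [hgK t x hKx, hhK x hKx, sub_self, mul_zero]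
  have hR1 : (∫ x : ℝ, ((if x < b then f₂ t x else 0) - (if x < a then f₂m t x else 0))
        * (f t x - Function.leftLim (fun s => f s x) t))
      = ∫ x in (-M)..M, ((if x < b then f₂ t x else 0) - (if x < a then f₂m t x else 0))
        * (f t x - Function.leftLim (fun s => f s x) t) := by
    rw [intervalIntegral.integral_of_le hMM']
    exact (setIntegral_eq_integral_of_forall_compl_eq_zero hz).symm
  have hR2 : (∫ x in (-M)..M, ((if x < b then f₂ t x else 0)
          - (if x < a then f₂m t x else 0))
        * (f t x - Function.leftLim (fun s => f s x) t))
      = (∫ x in (-M)..M, (if x < b then f₂ t x else 0)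
          * (f t x - Function.leftLim (fun s => f s x) t))
        - ∫ x in (-M)..M, (if x < a then f₂m t x else 0)
          * (f t x - Function.leftLim (fun s => f s x) t) := by
    rw [← intervalIntegral.integral_sub (iP (-M) M) (iQ (-M) M)]
    exact intervalIntegral.integral_congr fun x _ => by ring
  have hR3 : (∫ x in (-M)..M, (if x < b then f₂ t x else 0)
        * (f t x - Function.leftLim (fun s => f s x) t))
      = ∫ x in (-M)..b, f₂ t x * (f t x - Function.leftLim (fun s => f s x) t) := by
    rw [← intervalIntegral.integral_add_adjacent_intervals (iP (-M) b) (iP b M)]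
    have h1 : (∫ x in b..M, (if x < b then f₂ t x else 0)
        * (f t x - Function.leftLim (fun s => f s x) t)) = 0 := by
      have e : EqOn (fun x => (if x < b then f₂ t x else 0)
          * (f t x - Function.leftLim (fun s => f s x) t)) (fun _ => (0:ℝ)) (uIcc b M) := by
        intro x hxx
        rw [Set.uIcc_of_le hbM] at hxx
        simp only
        rw [if_neg (not_lt.2 hxx.1), zero_mul]
      rw [intervalIntegral.integral_congr e]
      simp
    rw [h1, add_zero]
    apply intervalIntegral.integral_congr_ae
    filter_upwards [ae_ne_pt b] with x hxb hxI
    rw [Set.uIoc_of_le hMb] at hxI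
    rw [if_pos (lt_of_le_of_ne hxI.2 hxb)]
  have hR4 : (∫ x in (-M)..M, (if x < a then f₂m t x else 0)
        * (f t x - Function.leftLim (fun s => f s x) t))
      = ∫ x in (-M)..a, f₂m t x * (f t x - Function.leftLim (fun s => f s x) t) := by
    rw [← intervalIntegral.integral_add_adjacent_intervals (iQ (-M) a) (iQ a M)]
    have h1 : (∫ x in a..M, (if x < a then f₂m t x else 0)
        * (f t x - Function.leftLim (fun s => f s x) t)) = 0 := by
      have e : EqOn (fun x => (if x < a then f₂m t x else 0)
          * (f t x - Function.leftLim (fun s => f s x) t)) (fun _ => (0:ℝ)) (uIcc a M) := by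
        intro x hxx
        rw [Set.uIcc_of_le haM] at hxx
        simp only
        rw [if_neg (not_lt.2 hxx.1), zero_mul]
      rw [intervalIntegral.integral_congr e]
      simp
    rw [h1, add_zero]
    apply intervalIntegral.integral_congr_ae
    filter_upwards [ae_ne_pt a] with x hxa hxI
    rw [Set.uIoc_of_le hMa] at hxI
    rw [if_pos (lt_of_le_of_ne hxI.2 hxa)]
  have hR5 : (∫ x in (-M)..b, f₂ t x * (f t x - Function.leftLim (fun s => f s x) t))
      = (∫ x in (-M)..b, f₂ t x * f t x)
        - ∫ x in (-M)..b, f₂ t x * Function.leftLim (fun s => f s x) t := by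
    rw [← intervalIntegral.integral_sub (iA1 (-M) b) (iA2 (-M) b)]
    exact intervalIntegral.integral_congr fun x _ => by ring
  have hR6 : (∫ x in (-M)..a, f₂m t x * (f t x - Function.leftLim (fun s => f s x) t))
      = (∫ x in (-M)..a, f₂m t x * f t x)
        - ∫ x in (-M)..a, f₂m t x * Function.leftLim (fun s => f s x) t := by
    rw [← intervalIntegral.integral_sub (iA3 (-M) a) (iA4 (-M) a)]
    exact intervalIntegral.integral_congr fun x _ => by ring
  rw [hLHSe, hR1, hR2, hR3, hR4, hR5, hR6]
  linear_combination hA2B + hBsplit + hA3 - hA1 - hA4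
end
end

section
/- Let Y be a càdlàg process and V = Σ_n 1_{[σ_n, τ_n)} a {0,1}-valued pure jump process with σ_n ≤ τ_n ≤ σ_{n+1} stopping times increasing to infinity, such that V_t Y_t = 0 for all t. Then the pathwise/Dirichlet integral satisfies ∫_0^t V_{s−} dY_s = Σ_{s ≤ t} V_{s−} Y_s, where the integral is defined by integration by parts ∫_0^t V_{s−} dY_s = V_t Y_t − V_0 Y_0 − ∫_0^t Y_{s−} dV_s − [V, Y]_t. -/
open MeasureTheory Filter Set Function Topology

noncomputable section

open GBE MeasureTheory Set Filter Function

/-- if `V = Σ_n 1_{[σ_n, τ_n)}` is a `{0,1}`-valued pure jump process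
with stopping times `σ_n ≤ τ_n ≤ σ_{n+1}` increasing to infinity and `V Y = 0`, then
the integral `∫_0^t V_{s-} dY_s`, defined by integration by parts
`I_t = V_t Y_t − V_0 Y_0 − ∫_0^t Y_{s-} dV_s − [V,Y]_t` (the Stieltjes integral
against the pure jump `V` being the jump sum), equals `Σ_{s ≤ t} V_{s-} Y_s`. -/
theorem stmt18 {Ω : Type*} {m0 : MeasurableSpace Ω} (μ : Measure Ω) [IsProbabilityMeasure μ]
    (ℱ : Filtration ℝ m0) (Y V : ℝ → Ω → ℝ) (σ τ : ℕ → Ω → ℝ)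
    (hY : Cadlag Y)
    (hst : ∀ n, IsStoppingTime ℱ (fun ω => ((σ n ω : ℝ) : WithTop ℝ)) ∧
      IsStoppingTime ℱ (fun ω => ((τ n ω : ℝ) : WithTop ℝ)))
    (hord : ∀ n ω, σ n ω ≤ τ n ω ∧ τ n ω ≤ σ (n+1) ω)
    (hlim : ∀ ω, Tendsto (fun n => σ n ω) atTop atTop)
    (hV : ∀ t ω, V t ω = ∑' n : ℕ, (if σ n ω ≤ t ∧ t < τ n ω then (1:ℝ) else 0))
    (hVY : ∀ t ω, V t ω * Y t ω = 0)
    (I : ℝ → Ω → ℝ)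
    (hI : ∀ t ω, I t ω = V t ω * Y t ω - V 0 ω * Y 0 ω
      - (∑' s : Ioc (0:ℝ) t,
          Function.leftLim (fun u => Y u ω) s * jump (fun u => V u ω) s)
      - jumpCov V Y t ω) :
    ∀ t ω, I t ω
      = ∑' s : Ioc (0:ℝ) t, Function.leftLim (fun u => V u ω) s * Y (s : ℝ) ω := by
  classical
  intro t ω
  -- N such that σ n ω > t for n ≥ N
  obtain ⟨N, hN⟩ : ∃ N, ∀ n ≥ N, t < σ n ω := by
    have := (hlim ω).eventually (eventually_gt_atTop t)
    exact eventually_atTop.1 this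
  -- finite sum representation of V on [-∞, t]
  have hfin : ∀ u : ℝ, u ≤ t →
      V u ω = ∑ n ∈ Finset.range N, (if σ n ω ≤ u ∧ u < τ n ω then (1:ℝ) else 0) := by
    intro u hu
    rw [hV]
    apply tsum_eq_sum
    intro n hn
    simp only [Finset.mem_range, not_lt] at hn
    have h1 := hN n hn
    simp only [ite_eq_right_iff, one_ne_zero, imp_false, not_and, not_lt]
    intro h2
    linarith
  -- the finite set of possible jump times
  set S : Finset ℝ :=
    (Finset.range N).image (fun n => σ n ω) ∪ (Finset.range N).image (fun n => τ n ω) with hS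
  -- jumps of V vanish off S
  have hjump : ∀ s : ℝ, s ∈ Ioc (0:ℝ) t → s ∉ S → jump (fun u => V u ω) s = 0 := by
    intro s hs hsS
    obtain ⟨δ, hδpos, hδ⟩ : ∃ δ > 0, ∀ x ∈ S, x ∉ Ioo (s - δ) s := by
      by_cases h : (S.filter (· < s)).Nonempty
      · set m := (S.filter (· < s)).max' h with hm
        have hmm := (S.filter (· < s)).max'_mem h
        have hmlt : m < s := (Finset.mem_filter.1 hmm).2
        refine ⟨s - m, by linarith, ?_⟩
        intro x hx hmem
        have hxf : x ∈ S.filter (· < s) := Finset.mem_filter.2 ⟨hx, by simpa using hmem.2⟩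
        have := Finset.le_max' _ x hxf
        have h1 := hmem.1
        rw [← hm] at this
        linarith
      · refine ⟨1, one_pos, fun x hx hmem => ?_⟩
        exact h ⟨x, Finset.mem_filter.2 ⟨hx, by simpa using hmem.2⟩⟩
    have hconst : ∀ u, u ∈ Ioo (s - δ) s → V u ω = V s ω := by
      intro u hu
      have hu_le : u ≤ t := le_trans hu.2.le hs.2
      rw [hfin u hu_le, hfin s hs.2]
      apply Finset.sum_congr rfl
      intro n hn
      have hσS : σ n ω ∈ S := Finset.mem_union_left _ (Finset.mem_image_of_mem _ hn)
      have hτS : τ n ω ∈ S := Finset.mem_union_right _ (Finset.mem_image_of_mem _ hn)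
      have h1 : σ n ω ≤ u ↔ σ n ω ≤ s := by
        constructor
        · intro h; linarith [hu.2.le]
        · intro h
          by_contra hlt
          push_neg at hlt
          have hne : σ n ω ≠ s := fun he => hsS (he ▸ hσS)
          exact hδ _ hσS ⟨lt_trans hu.1 hlt, lt_of_le_of_ne h hne⟩
      have h2 : u < τ n ω ↔ s < τ n ω := by
        constructor
        · intro h
          by_contra hle
          push_neg at hle
          have hne : τ n ω ≠ s := fun he => hsS (he ▸ hτS)
          exact hδ _ hτS ⟨lt_trans hu.1 h, lt_of_le_of_ne hle hne⟩
        · intro h; exact lt_trans hu.2 h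
      simp only [h1, h2]
    have hleft : Function.leftLim (fun u => V u ω) s = V s ω := by
      have hne : (𝓝[<] s) ≠ ⊥ := (nhdsLT_neBot s).ne'
      apply leftLim_eq_of_tendsto
      refine Tendsto.congr' ?_ tendsto_const_nhds
      filter_upwards [Ioo_mem_nhdsLT_of_mem (⟨by linarith, le_refl s⟩ : s ∈ Ioc (s - δ) s)]
        with u hu
      exact (hconst u hu).symm
    simp [jump, hleft]
  -- summability of the two sums appearing in hI
  have hsum0 : ∀ s : Ioc (0:ℝ) t, (s:ℝ) ∉ S → jump (fun u => V u ω) (s:ℝ) = 0 :=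
    fun s hs => hjump s s.2 hs
  have hsummA : Summable (fun s : Ioc (0:ℝ) t =>
      Function.leftLim (fun u => Y u ω) (s:ℝ) * jump (fun u => V u ω) (s:ℝ)) := by
    apply summable_of_ne_finset_zero (s := S.subtype (fun x => x ∈ Ioc (0:ℝ) t))
    intro b hb
    have : (b:ℝ) ∉ S := by
      intro h
      exact hb (Finset.mem_subtype.2 h)
    rw [hsum0 b this, mul_zero]
  have hsummB : Summable (fun s : Ioc (0:ℝ) t =>
      jump (fun u => V u ω) (s:ℝ) * jump (fun u => Y u ω) (s:ℝ)) := by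
    apply summable_of_ne_finset_zero (s := S.subtype (fun x => x ∈ Ioc (0:ℝ) t))
    intro b hb
    have : (b:ℝ) ∉ S := by
      intro h
      exact hb (Finset.mem_subtype.2 h)
    rw [hsum0 b this, zero_mul]
  -- pointwise algebraic identity
  have key : ∀ s : Ioc (0:ℝ) t,
      Function.leftLim (fun u => V u ω) (s:ℝ) * Y (s:ℝ) ω
        = -(Function.leftLim (fun u => Y u ω) (s:ℝ) * jump (fun u => V u ω) (s:ℝ))
          + -(jump (fun u => V u ω) (s:ℝ) * jump (fun u => Y u ω) (s:ℝ)) := by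
    intro s
    have h := hVY (s:ℝ) ω
    simp only [jump]
    ring_nf
    nlinarith [h]
  rw [hI]
  have h1 : V t ω * Y t ω = 0 := hVY t ω
  have h2 : V 0 ω * Y 0 ω = 0 := hVY 0 ω
  have h3 : jumpCov V Y t ω
      = ∑' s : Ioc (0:ℝ) t, jump (fun u => V u ω) (s:ℝ) * jump (fun u => Y u ω) (s:ℝ) := rfl
  rw [h1, h2, h3]
  have h4 : (∑' s : Ioc (0:ℝ) t, Function.leftLim (fun u => V u ω) (s:ℝ) * Y (s:ℝ) ω)
      = ∑' s : Ioc (0:ℝ) t,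
          (-(Function.leftLim (fun u => Y u ω) (s:ℝ) * jump (fun u => V u ω) (s:ℝ))
            + -(jump (fun u => V u ω) (s:ℝ) * jump (fun u => Y u ω) (s:ℝ))) :=
    tsum_congr key
  rw [h4, Summable.tsum_add hsummA.neg hsummB.neg, tsum_neg, tsum_neg]
  ring
end
end
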